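/- arXiv:2308.15680 — 6 statements merged into one kernel-verified Lean document; each statement's English description precedes it below -/
import Mathlib

section
/- For every compactly supported C^1 function f : ℝ → ℝ, one has ‖f‖_{L^2}^8 ≤ ‖f‖_{L^1}^4 ‖f'‖_{L^2}^2 ‖f‖_{L^2}^2; equivalently ‖f‖_{L^2}^6 ≤ ‖f‖_{L^1}^4 ‖f'‖_{L^2}^2 (one-dimensional Nash inequality with non-optimal constant). -/
open MeasureTheory Real Filter Set

/-- One-dimensional Nash inequality with non-optimal constant:
for every compactly supported `C¹` function `f : ℝ → ℝ`,
`‖f‖_{L²}⁶ ≤ ‖f‖_{L¹}⁴ ‖f'‖_{L²}²`, i.e. `(∫ f²)³ ≤ (∫|f|)⁴ (∫ (f')²)`. -/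
theorem nash_one_dim (f : ℝ → ℝ)
    (hf : ContDiff ℝ 1 f) (hsupp : HasCompactSupport f) :
    (∫ x : ℝ, f x ^ 2) ^ 3 ≤
      (∫ x : ℝ, |f x|) ^ 4 * ∫ x : ℝ, deriv f x ^ 2 := by
  set g : ℝ → ℝ := fun x => f x * f x with hg_def
  have hg : ContDiff ℝ 1 g := hf.mul hf
  have hgs : HasCompactSupport g := hsupp.mul_right
  have hfc : Continuous f := hf.continuous
  have hf'c : Continuous (deriv f) := hf.continuous_deriv le_rfl
  have hgc : Continuous g := hfc.mul hfc
  have hg'c : Continuous (deriv g) := hg.continuous_deriv le_rfl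
  have hg's : HasCompactSupport (deriv g) := hgs.deriv
  -- integrability of everything
  have int_g : Integrable g := hgc.integrable_of_hasCompactSupport hgs
  have int_g' : Integrable (deriv g) := hg'c.integrable_of_hasCompactSupport hg's
  have int_absg' : Integrable (fun x => |deriv g x|) := int_g'.abs
  have int_absf : Integrable (fun x => |f x|) :=
    (hfc.integrable_of_hasCompactSupport hsupp).abs
  have int_ff' : Integrable (fun x => |f x| * |deriv f x|) :=
    ((hfc.abs.mul hf'c.abs).integrable_of_hasCompactSupport
      ((hsupp.abs.mul_right)))
  have int_f2 : Integrable (fun x => f x ^ 2) := by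
    simpa [hg_def, sq] using int_g
  have int_f'2 : Integrable (fun x => deriv f x ^ 2) :=
    ((hf'c.mul hf'c).integrable_of_hasCompactSupport
      (by simpa [sq] using hsupp.deriv.mul_right)).congr
      (by filter_upwards with x; rw [Pi.mul_apply]; ring)
  set A := ∫ x : ℝ, |f x| * |deriv f x| with hA_def
  set B := ∫ x : ℝ, f x ^ 2 with hB_def
  set C := ∫ x : ℝ, deriv f x ^ 2 with hC_def
  set L := ∫ x : ℝ, |f x| with hL_def
  have hA0 : 0 ≤ A := integral_nonneg fun x => by positivity
  have hB0 : 0 ≤ B := integral_nonneg fun x => by positivity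
  have hC0 : 0 ≤ C := integral_nonneg fun x => by positivity
  have hL0 : 0 ≤ L := integral_nonneg fun x => by positivity
  -- pointwise bound : f b ^ 2 ≤ A
  have pointwise : ∀ b : ℝ, f b ^ 2 ≤ A := by
    intro b
    have key1 : ∫ x in Iic b, deriv g x = g b := hgs.integral_Iic_deriv_eq hg b
    have key2 : ∫ x : ℝ, deriv g x = 0 :=
      integral_eq_zero_of_hasDerivAt_of_integrable
        (fun x => (hg.differentiable one_ne_zero x).hasDerivAt) int_g' int_g
    have split : (∫ x in Iic b, deriv g x) + ∫ x in Ioi b, deriv g x = 0 := by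
      rw [← key2, ← setIntegral_union (Iic_disjoint_Ioi le_rfl) measurableSet_Ioi
        int_g'.integrableOn int_g'.integrableOn]
      simp [Set.Iic_union_Ioi]
    have h1 : (∫ x in Iic b, deriv g x) ≤ ∫ x in Iic b, |deriv g x| :=
      setIntegral_mono int_g'.integrableOn int_absg'.integrableOn
        fun x => le_abs_self _
    have h2 : -(∫ x in Ioi b, deriv g x) ≤ ∫ x in Ioi b, |deriv g x| := by
      rw [← integral_neg]
      exact setIntegral_mono int_g'.neg.integrableOn
        int_absg'.integrableOn fun x => neg_le_abs _
    have habs : (∫ x in Iic b, |deriv g x|) + ∫ x in Ioi b, |deriv g x|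
        = ∫ x : ℝ, |deriv g x| := by
      rw [← setIntegral_union (Iic_disjoint_Ioi le_rfl) measurableSet_Ioi
        int_absg'.integrableOn int_absg'.integrableOn]
      simp [Set.Iic_union_Ioi]
    have hderiv_g : ∀ x, deriv g x = 2 * (f x * deriv f x) := by
      intro x
      have hd := (hf.differentiable one_ne_zero x)
      rw [hg_def]
      rw [deriv_fun_mul hd hd]
      ring
    have habs2 : (∫ x : ℝ, |deriv g x|) = 2 * A := by
      rw [hA_def, ← integral_const_mul]
      congr 1
      ext x
      rw [hderiv_g x, abs_mul, abs_mul, abs_two]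
    have h2g : 2 * g b ≤ 2 * A := by
      have : g b + g b ≤ (∫ x in Iic b, |deriv g x|) + ∫ x in Ioi b, |deriv g x| := by
        have e1 : g b = ∫ x in Iic b, deriv g x := key1.symm
        have e2 : g b = -(∫ x in Ioi b, deriv g x) := by linarith [split, key1]
        calc g b + g b = (∫ x in Iic b, deriv g x) + -(∫ x in Ioi b, deriv g x) := by
              rw [← e1, ← e2]
          _ ≤ _ := add_le_add h1 h2
      rw [habs, habs2] at this
      linarith
    have : g b ≤ A := by linarith
    simpa [hg_def, sq] using this
  -- step 1 : B ≤ sqrt A * L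
  have step1 : B ≤ Real.sqrt A * L := by
    rw [hB_def, hL_def, ← integral_const_mul]
    refine integral_mono int_f2 (int_absf.const_mul _) fun x => ?_
    have h1 : |f x| ≤ Real.sqrt A := by
      rw [← Real.sqrt_sq_eq_abs]
      exact Real.sqrt_le_sqrt (pointwise x)
    calc f x ^ 2 = |f x| * |f x| := by rw [← abs_mul, abs_mul_self]; ring
      _ ≤ Real.sqrt A * |f x| := mul_le_mul_of_nonneg_right h1 (abs_nonneg _)
  -- step 2 : A ≤ sqrt B * sqrt C  (Cauchy–Schwarz)
  have step2 : A ≤ Real.sqrt B * Real.sqrt C := by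
    have hpq : Real.HolderConjugate 2 2 := Real.HolderConjugate.two_two
    have hmf : MemLp (fun x => |f x|) (ENNReal.ofReal 2) :=
      hfc.abs.memLp_of_hasCompactSupport (μ := volume) hsupp.abs
    have hmf' : MemLp (fun x => |deriv f x|) (ENNReal.ofReal 2) :=
      hf'c.abs.memLp_of_hasCompactSupport (μ := volume) hsupp.deriv.abs
    have := integral_mul_le_Lp_mul_Lq_of_nonneg hpq
      (Filter.Eventually.of_forall fun x => abs_nonneg (f x))
      (Filter.Eventually.of_forall fun x => abs_nonneg (deriv f x)) hmf hmf'
    have e1 : (∫ x : ℝ, |f x| ^ (2 : ℝ)) = B := by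
      rw [hB_def]; congr 1; ext x
      rw [show |f x| ^ (2:ℝ) = |f x| ^ (2:ℕ) by
        rw [← Real.rpow_natCast]; norm_num]
      rw [sq_abs]
    have e2 : (∫ x : ℝ, |deriv f x| ^ (2 : ℝ)) = C := by
      rw [hC_def]; congr 1; ext x
      rw [show |deriv f x| ^ (2:ℝ) = |deriv f x| ^ (2:ℕ) by
        rw [← Real.rpow_natCast]; norm_num]
      rw [sq_abs]
    rw [e1, e2] at this
    rw [hA_def]
    calc A ≤ B ^ (1/2 : ℝ) * C ^ (1/2 : ℝ) := this
      _ = Real.sqrt B * Real.sqrt C := by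
          rw [Real.sqrt_eq_rpow, Real.sqrt_eq_rpow]
  -- conclude
  have hsB := Real.sq_sqrt hB0
  have hsC := Real.sq_sqrt hC0
  have hsA := Real.sq_sqrt hA0
  have hsB0 := Real.sqrt_nonneg B
  have hsC0 := Real.sqrt_nonneg C
  have hsA0 := Real.sqrt_nonneg A
  -- B² ≤ A L²
  have hB2 : B ^ 2 ≤ A * L ^ 2 := by
    have := mul_le_mul step1 step1 hB0 (by positivity)
    nlinarith [this]
  rcases eq_or_lt_of_le hB0 with hB | hB
  · rw [← hB]
    norm_num
    positivity
  · -- B > 0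
    set s := Real.sqrt B
    set t := Real.sqrt C
    have hs : 0 < s := Real.sqrt_pos.mpr hB
    have key : B ^ 2 ≤ s * t * L ^ 2 := le_trans hB2 (by nlinarith [sq_nonneg L])
    -- B² ≤ s t L², B = s², so s⁴ ≤ s t L², s³ ≤ t L², s⁶ ≤ t² L⁴ = C L⁴
    have h3 : s ^ 3 ≤ t * L ^ 2 := by
      have : s * s ^ 3 ≤ s * (t * L ^ 2) := by nlinarith
      exact le_of_mul_le_mul_left this hs
    have h6 : (s ^ 3) ^ 2 ≤ (t * L ^ 2) ^ 2 :=
      mul_self_le_mul_self (by positivity) h3 |>.trans_eq (by ring) |>.trans_eq' (by ring)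
    calc B ^ 3 = (s ^ 3) ^ 2 := by rw [← hsB]; ring
      _ ≤ (t * L ^ 2) ^ 2 := h6
      _ = L ^ 4 * C := by rw [← hsC]; ring
end

section
/- Let V : ℝ → ℝ be continuous, bounded, nonnegative, and suppose ψ₁, ψ₂ : ℝ → ℝ are positive C^2 solutions of -ψ'' + Vψ = 0 on ℝ. Set ψ_* = (ψ₁ψ₂)^{1/2} and let k = ψ₁'ψ₂ - ψ₁ψ₂' (the Wronskian, which is constant). Then -ψ_*'' + Vψ_* = k²/(4 ψ_*³) on ℝ. -/
open MeasureTheory Real Filter Set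

/-- If `ψ₁, ψ₂` are positive `C²` solutions of `-ψ'' + Vψ = 0` with constant
Wronskian `k = ψ₁'ψ₂ - ψ₁ψ₂'`, then `ψ_* = √(ψ₁ψ₂)` satisfies
`-ψ_*'' + Vψ_* = k²/(4ψ_*³)`. -/
theorem geometric_mean_superharmonic (V ψ₁ ψ₂ : ℝ → ℝ) (k : ℝ)
    (hV : Continuous V) (hVbdd : ∃ M, ∀ x, V x ≤ M) (hVnn : ∀ x, 0 ≤ V x)
    (h1 : ContDiff ℝ 2 ψ₁) (h2 : ContDiff ℝ 2 ψ₂)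
    (h1pos : ∀ x, 0 < ψ₁ x) (h2pos : ∀ x, 0 < ψ₂ x)
    (heq1 : ∀ x, deriv (deriv ψ₁) x = V x * ψ₁ x)
    (heq2 : ∀ x, deriv (deriv ψ₂) x = V x * ψ₂ x)
    (hk : ∀ x, deriv ψ₁ x * ψ₂ x - ψ₁ x * deriv ψ₂ x = k) :
    ∀ x, -deriv (deriv fun y => Real.sqrt (ψ₁ y * ψ₂ y)) x
        + V x * Real.sqrt (ψ₁ x * ψ₂ x)
      = k ^ 2 / (4 * Real.sqrt (ψ₁ x * ψ₂ x) ^ 3) := by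
  -- differentiability facts
  have h1d : Differentiable ℝ ψ₁ := h1.differentiable (by norm_num)
  have h2d : Differentiable ℝ ψ₂ := h2.differentiable (by norm_num)
  have h1d' : Differentiable ℝ (deriv ψ₁) := by
    have h := (contDiff_succ_iff_deriv (n := 1)).mp (by exact_mod_cast h1 : ContDiff ℝ (1+1) ψ₁)
    exact h.2.2.differentiable one_ne_zero
  have h2d' : Differentiable ℝ (deriv ψ₂) := by
    have h := (contDiff_succ_iff_deriv (n := 1)).mp (by exact_mod_cast h2 : ContDiff ℝ (1+1) ψ₂)
    exact h.2.2.differentiable one_ne_zero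
  have hfpos : ∀ x, 0 < ψ₁ x * ψ₂ x := fun x => mul_pos (h1pos x) (h2pos x)
  have hspos : ∀ x, 0 < Real.sqrt (ψ₁ x * ψ₂ x) := fun x => Real.sqrt_pos.mpr (hfpos x)
  have hsq : ∀ x, Real.sqrt (ψ₁ x * ψ₂ x) ^ 2 = ψ₁ x * ψ₂ x := fun x =>
    Real.sq_sqrt (hfpos x).le
  -- first derivative of the geometric mean
  have hf : ∀ x, HasDerivAt (fun y => ψ₁ y * ψ₂ y)
      (deriv ψ₁ x * ψ₂ x + ψ₁ x * deriv ψ₂ x) x := fun x =>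
    ((h1d x).hasDerivAt).mul ((h2d x).hasDerivAt)
  have hg : ∀ x, HasDerivAt (fun y => Real.sqrt (ψ₁ y * ψ₂ y))
      ((deriv ψ₁ x * ψ₂ x + ψ₁ x * deriv ψ₂ x) / (2 * Real.sqrt (ψ₁ x * ψ₂ x))) x :=
    fun x => (hf x).sqrt (hfpos x).ne'
  have hg' : deriv (fun y => Real.sqrt (ψ₁ y * ψ₂ y))
      = fun x => (deriv ψ₁ x * ψ₂ x + ψ₁ x * deriv ψ₂ x) / (2 * Real.sqrt (ψ₁ x * ψ₂ x)) :=
    funext fun x => (hg x).deriv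
  intro x
  set s := Real.sqrt (ψ₁ x * ψ₂ x) with hs
  have hsne : s ≠ 0 := (hspos x).ne'
  -- second derivative
  have hp : HasDerivAt (fun y => deriv ψ₁ y * ψ₂ y + ψ₁ y * deriv ψ₂ y)
      (V x * ψ₁ x * ψ₂ x + deriv ψ₁ x * deriv ψ₂ x
        + (deriv ψ₁ x * deriv ψ₂ x + ψ₁ x * (V x * ψ₂ x))) x := by
    have ha : HasDerivAt (deriv ψ₁) (V x * ψ₁ x) x := by
      have := (h1d' x).hasDerivAt
      rwa [heq1 x] at this
    have hb : HasDerivAt (deriv ψ₂) (V x * ψ₂ x) x := by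
      have := (h2d' x).hasDerivAt
      rwa [heq2 x] at this
    have := (ha.mul ((h2d x).hasDerivAt)).add (((h1d x).hasDerivAt).mul hb)
    exact this
  have hden : HasDerivAt (fun y => 2 * Real.sqrt (ψ₁ y * ψ₂ y))
      (2 * ((deriv ψ₁ x * ψ₂ x + ψ₁ x * deriv ψ₂ x) / (2 * s))) x :=
    (hg x).const_mul 2
  have h2nd : HasDerivAt (fun y =>
      (deriv ψ₁ y * ψ₂ y + ψ₁ y * deriv ψ₂ y) / (2 * Real.sqrt (ψ₁ y * ψ₂ y)))
      (((V x * ψ₁ x * ψ₂ x + deriv ψ₁ x * deriv ψ₂ x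
        + (deriv ψ₁ x * deriv ψ₂ x + ψ₁ x * (V x * ψ₂ x))) * (2 * s)
        - (deriv ψ₁ x * ψ₂ x + ψ₁ x * deriv ψ₂ x)
          * (2 * ((deriv ψ₁ x * ψ₂ x + ψ₁ x * deriv ψ₂ x) / (2 * s)))) / (2 * s) ^ 2) x :=
    hp.div hden (by positivity)
  have hdd : deriv (deriv fun y => Real.sqrt (ψ₁ y * ψ₂ y)) x
      = ((V x * ψ₁ x * ψ₂ x + deriv ψ₁ x * deriv ψ₂ x
        + (deriv ψ₁ x * deriv ψ₂ x + ψ₁ x * (V x * ψ₂ x))) * (2 * s)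
        - (deriv ψ₁ x * ψ₂ x + ψ₁ x * deriv ψ₂ x)
          * (2 * ((deriv ψ₁ x * ψ₂ x + ψ₁ x * deriv ψ₂ x) / (2 * s)))) / (2 * s) ^ 2 := by
    rw [hg']
    exact h2nd.deriv
  rw [hdd, ← hk x]
  have hsq' : s ^ 2 = ψ₁ x * ψ₂ x := hsq x
  field_simp
  linear_combination (16 * V x * s ^ 2 - 16 * deriv ψ₁ x * deriv ψ₂ x) * hsq'
end

section
/- Let V : ℝ → ℝ be continuous and nonnegative, let ψ : ℝ → (0,∞) be C^2 with -ψ'' + Vψ ≥ 0 on ℝ, and let f ∈ C_0^1(ℝ). Writing g = f/ψ, one has ∫_ℝ (|f'|² + V f²) dx = ∫_ℝ |g'|² ψ² dx + ∫_ℝ g² ψ (-ψ'' + Vψ) dx. -/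
open MeasureTheory Real Filter Set

lemma integral_deriv_eq_zero' (u : ℝ → ℝ) (hu : ContDiff ℝ 1 u)
    (h : HasCompactSupport u) : (∫ x : ℝ, deriv u x) = 0 := by
  obtain ⟨r, hr⟩ := (Metric.isBounded_iff_subset_ball (0 : ℝ)).mp h.isBounded
  set R : ℝ := max r 1 with hR
  have hRpos : (0:ℝ) < R := lt_of_lt_of_le one_pos (le_max_right _ _)
  have hsub : tsupport u ⊆ Metric.ball (0:ℝ) R :=
    hr.trans (Metric.ball_subset_ball (le_max_left _ _))
  have hmem : ∀ x : ℝ, x ∈ tsupport u → -R < x ∧ x < R := by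
    intro x hx
    have := hsub hx
    rw [Metric.mem_ball, Real.dist_eq, sub_zero, abs_lt] at this
    exact this
  have h1 : (∫ x : ℝ, deriv u x) = ∫ x in Ioc (-R) R, deriv u x := by
    refine (setIntegral_eq_integral_of_forall_compl_eq_zero ?_).symm
    intro x hx
    by_contra hne
    have hxts : x ∈ tsupport u := support_deriv_subset (by simpa using hne)
    obtain ⟨h1, h2⟩ := hmem x hxts
    exact hx ⟨h1, h2.le⟩
  have hur : u R = 0 := by
    apply image_eq_zero_of_notMem_tsupport
    intro hc
    exact absurd (hmem R hc).2 (lt_irrefl R)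
  have hul : u (-R) = 0 := by
    apply image_eq_zero_of_notMem_tsupport
    intro hc
    exact absurd (hmem (-R) hc).1 (lt_irrefl (-R))
  rw [h1, ← intervalIntegral.integral_of_le (by linarith),
    intervalIntegral.integral_deriv_eq_sub
      (fun x _ => hu.differentiable one_ne_zero x)
      ((hu.continuous_deriv le_rfl).intervalIntegrable _ _),
    hur, hul, sub_zero]

/-- Ground-state substitution identity: for `V` continuous nonnegative,
`ψ` a positive `C²` function with `-ψ'' + Vψ ≥ 0`, and `f ∈ C₀¹(ℝ)`,
writing `g = f/ψ` one has
`∫ (|f'|² + V f²) = ∫ |g'|² ψ² + ∫ g² ψ (-ψ'' + Vψ)`. -/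
theorem ground_state_substitution (V ψ f : ℝ → ℝ)
    (hV : Continuous V) (hVnn : ∀ x, 0 ≤ V x)
    (hψ : ContDiff ℝ 2 ψ) (hψpos : ∀ x, 0 < ψ x)
    (hsuper : ∀ x, 0 ≤ -deriv (deriv ψ) x + V x * ψ x)
    (hf : ContDiff ℝ 1 f) (hsupp : HasCompactSupport f) :
    (∫ x : ℝ, deriv f x ^ 2 + V x * f x ^ 2)
      = (∫ x : ℝ, (deriv (fun y => f y / ψ y) x) ^ 2 * ψ x ^ 2)
        + ∫ x : ℝ, (f x / ψ x) ^ 2 * ψ x * (-deriv (deriv ψ) x + V x * ψ x) := by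
  set g : ℝ → ℝ := fun y => f y / ψ y with hgdef
  have hψne : ∀ x, ψ x ≠ 0 := fun x => (hψpos x).ne'
  have hψ1 : ContDiff ℝ 1 ψ := hψ.of_le (by norm_num)
  have hψd : ContDiff ℝ 1 (deriv ψ) := by
    have := (contDiff_succ_iff_deriv (n := 1)).mp (by exact_mod_cast hψ)
    exact this.2.2
  have hψdd : Continuous (deriv (deriv ψ)) := hψd.continuous_deriv le_rfl
  have hg : ContDiff ℝ 1 g := hf.div hψ1 hψne
  have hfd : Differentiable ℝ f := hf.differentiable one_ne_zero
  have hψdiff : Differentiable ℝ ψ := hψ1.differentiable one_ne_zero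
  have hgd : Differentiable ℝ g := hg.differentiable one_ne_zero
  have hψddiff : Differentiable ℝ (deriv ψ) := hψd.differentiable one_ne_zero
  -- supports
  have hgsupp : HasCompactSupport g := hsupp.mono (fun x hx => by
    simp only [Function.mem_support] at hx ⊢
    intro h0; apply hx; simp [hgdef, h0])
  have hdgsupp : HasCompactSupport (deriv g) := hgsupp.deriv
  -- the auxiliary function
  set u : ℝ → ℝ := fun x => g x ^ 2 * ψ x * deriv ψ x with hudef
  have hu : ContDiff ℝ 1 u := ((hg.pow 2).mul hψ1).mul hψd
  have husupp : HasCompactSupport u := hgsupp.mono (fun x hx => by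
    simp only [Function.mem_support] at hx ⊢
    intro h0; apply hx; simp [hudef, h0]
  )
  have hud : ∀ x, deriv u x
      = 2 * g x * deriv g x * ψ x * deriv ψ x + g x ^ 2 * deriv ψ x ^ 2
        + g x ^ 2 * ψ x * deriv (deriv ψ) x := by
    intro x
    have h1 : HasDerivAt u
        ((((2 : ℕ) * g x ^ 1 * deriv g x) * ψ x + g x ^ 2 * deriv ψ x) * deriv ψ x
          + g x ^ 2 * ψ x * deriv (deriv ψ) x) x := by
      exact ((((hgd x).hasDerivAt.pow 2).mul (hψdiff x).hasDerivAt).mul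
        (hψddiff x).hasDerivAt)
    rw [h1.deriv]; push_cast; ring
  -- product rule for f = g * ψ
  have hfg : ∀ x, f x = g x * ψ x := fun x => (div_mul_cancel₀ _ (hψne x)).symm
  have hdf : ∀ x, deriv f x = deriv g x * ψ x + g x * deriv ψ x := by
    intro x
    have h := ((hgd x).hasDerivAt.mul (hψdiff x).hasDerivAt)
    have heq : (g * ψ) = f := funext fun y => (hfg y).symm
    rw [heq] at h
    exact h.deriv
  -- pointwise identity
  have key : ∀ x, deriv f x ^ 2 + V x * f x ^ 2
      = deriv g x ^ 2 * ψ x ^ 2 + deriv u x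
        + (f x / ψ x) ^ 2 * ψ x * (-deriv (deriv ψ) x + V x * ψ x) := by
    intro x
    have hgx : f x / ψ x = g x := rfl
    rw [hud x, hgx, hdf x, hfg x]
    ring
  -- integrability
  have hBc : Continuous fun x => deriv g x ^ 2 * ψ x ^ 2 :=
    ((hg.continuous_deriv le_rfl).pow 2).mul (hψ1.continuous.pow 2)
  have hBsupp : HasCompactSupport fun x => deriv g x ^ 2 * ψ x ^ 2 :=
    hdgsupp.mono (fun x hx => by
      simp only [Function.mem_support] at hx ⊢
      intro h0; apply hx; simp [h0])
  have hB : Integrable fun x => deriv g x ^ 2 * ψ x ^ 2 :=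
    hBc.integrable_of_hasCompactSupport hBsupp
  have hCc : Continuous (deriv u) := hu.continuous_deriv le_rfl
  have hC : Integrable (deriv u) :=
    hCc.integrable_of_hasCompactSupport husupp.deriv
  have hDc : Continuous fun x => (f x / ψ x) ^ 2 * ψ x * (-deriv (deriv ψ) x + V x * ψ x) :=
    (((hf.continuous.div hψ1.continuous hψne).pow 2).mul hψ1.continuous).mul
      (hψdd.neg.add (hV.mul hψ1.continuous))
  have hDsupp : HasCompactSupport
      fun x => (f x / ψ x) ^ 2 * ψ x * (-deriv (deriv ψ) x + V x * ψ x) :=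
    hsupp.mono (fun x hx => by
      simp only [Function.mem_support] at hx ⊢
      intro h0; apply hx; simp [h0])
  have hD : Integrable fun x => (f x / ψ x) ^ 2 * ψ x * (-deriv (deriv ψ) x + V x * ψ x) :=
    hDc.integrable_of_hasCompactSupport hDsupp
  calc (∫ x : ℝ, deriv f x ^ 2 + V x * f x ^ 2)
      = ∫ x : ℝ, deriv g x ^ 2 * ψ x ^ 2 + deriv u x
          + (f x / ψ x) ^ 2 * ψ x * (-deriv (deriv ψ) x + V x * ψ x) := by
        exact integral_congr_ae (Eventually.of_forall key)
    _ = (∫ x : ℝ, deriv g x ^ 2 * ψ x ^ 2) + (∫ x : ℝ, deriv u x)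
          + ∫ x : ℝ, (f x / ψ x) ^ 2 * ψ x * (-deriv (deriv ψ) x + V x * ψ x) := by
        rw [integral_add (f := fun x => deriv g x ^ 2 * ψ x ^ 2 + deriv u x) (hB.add hC) hD]
        rw [integral_add hB hC]
    _ = (∫ x : ℝ, deriv g x ^ 2 * ψ x ^ 2)
          + ∫ x : ℝ, (f x / ψ x) ^ 2 * ψ x * (-deriv (deriv ψ) x + V x * ψ x) := by
        rw [integral_deriv_eq_zero' u hu husupp, add_zero]
end

section
/- Let V : ℝ → ℝ be continuous, bounded, nonnegative with 0 < ∫_ℝ |x| V(x) dx < ∞. Then there exists a positive increasing C^2 solution ψ₁ of -ψ''+Vψ=0 on ℝ with ψ₁(x) → 1 and x ψ₁'(x) → 0 as x → -∞. -/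
open MeasureTheory Real Filter Set
open Topology BoundedContinuousFunction

/-- FTC for integrals over `Iic`. -/
lemma hasDerivAt_integral_Iic {h : ℝ → ℝ} (hc : Continuous h)
    (hi : ∀ b : ℝ, IntegrableOn h (Iic b)) (x : ℝ) :
    HasDerivAt (fun t => ∫ y in Iic t, h y) (h x) x := by
  have key : ∀ t : ℝ, ∫ y in Iic t, h y = (∫ y in Iic x, h y) + ∫ y in x..t, h y := by
    intro t
    rw [← intervalIntegral.integral_Iic_sub_Iic (hi x) (hi t)]
    ring
  have hd : HasDerivAt (fun t : ℝ => (∫ y in Iic x, h y) + ∫ y in x..t, h y) (h x) x :=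
    (intervalIntegral.integral_hasDerivAt_right (hc.intervalIntegrable x x)
      (hc.stronglyMeasurableAtFilter _ _) hc.continuousAt).const_add _
  exact hd.congr_of_eventuallyEq (Filter.Eventually.of_forall key)

/-- Tail of an integrable function vanishes at `-∞`. -/
lemma tendsto_integral_Iic_atBot' {h : ℝ → ℝ} (hi : Integrable h) :
    Tendsto (fun t => ∫ y in Iic t, h y) atBot (𝓝 0) := by
  have h1 : Tendsto (fun t : ℝ => ∫ y in t..(0:ℝ), h y) atBot (𝓝 (∫ y in Iic (0:ℝ), h y)) :=
    intervalIntegral_tendsto_integral_Iic 0 hi.integrableOn tendsto_id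
  have h2 : (fun t => ∫ y in Iic t, h y)
      = fun t => (∫ y in Iic (0:ℝ), h y) - ∫ y in t..(0:ℝ), h y := by
    funext t
    rw [← intervalIntegral.integral_Iic_sub_Iic hi.integrableOn hi.integrableOn]
    ring
  rw [h2]
  have h3 : Tendsto (fun t : ℝ => (∫ y in Iic (0:ℝ), h y) - ∫ y in t..(0:ℝ), h y) atBot
      (𝓝 ((∫ y in Iic (0:ℝ), h y) - ∫ y in Iic (0:ℝ), h y)) := tendsto_const_nhds.sub h1
  simpa using h3

lemma kernel_bound {x y : ℝ} (hyx : y ≤ x) :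
    (x - y) * (1 + max y 0) ≤ (1 + max x 0) * (1 + |y|) := by
  rcases le_total y 0 with h | h
  · rw [max_eq_right h, abs_of_nonpos h]
    nlinarith [le_max_left x 0, le_max_right x 0]
  · rw [max_eq_left h, abs_of_nonneg h, max_eq_left (le_trans h hyx)]
    nlinarith

lemma abs_kernel_bound {x y : ℝ} (hyx : y ≤ x) :
    |y| * (1 + max y 0) ≤ (1 + |x|) * (1 + |y|) := by
  rcases le_total y 0 with h | h
  · rw [max_eq_right h, abs_of_nonpos h]
    nlinarith [abs_nonneg x]
  · rw [max_eq_left h, abs_of_nonneg h]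
    have hx : y ≤ |x| := le_trans hyx (le_abs_self x)
    nlinarith [abs_nonneg x]

lemma split_integral {h : ℝ → ℝ} {x : ℝ} (hint : Integrable h)
    (hyint : IntegrableOn (fun y => y * h y) (Iic x)) :
    ∫ y in Iic x, (x - y) * h y
      = x * (∫ y in Iic x, h y) - ∫ y in Iic x, y * h y := by
  have : (fun y => (x - y) * h y) = fun y => x * h y - y * h y := by
    funext y; ring
  rw [this, integral_sub ((hint.const_mul x).integrableOn) hyint, integral_const_mul]
lemma exists_fixed (V : ℝ → ℝ) (hV : Continuous V) (hVnn : ∀ x, 0 ≤ V x)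
    (hg : Integrable (fun y => (1 + |y|) * V y)) :
    ∃ (ψ : ℝ → ℝ) (C : ℝ), Continuous ψ ∧ (∀ x, 1 ≤ ψ x) ∧
      (∀ x, ψ x ≤ C * (1 + max x 0)) ∧
      (∀ x, ψ x = 1 + ∫ y in Iic x, (x - y) * (V y * ψ y)) := by
  classical
  set g : ℝ → ℝ := fun y => (1 + |y|) * V y with hgdef
  have hgc : Continuous g := by fun_prop
  have hgnn : ∀ y, 0 ≤ g y := fun y => mul_nonneg (by positivity) (hVnn y)
  set A : ℝ := ∫ y, g y with hAdef
  have hA0 : 0 ≤ A := integral_nonneg hgnn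
  set η : ℝ → ℝ := fun x => ∫ y in Iic x, g y with hetadef
  have hηd : ∀ x, HasDerivAt η (g x) x :=
    fun x => hasDerivAt_integral_Iic hgc (fun _ => hg.integrableOn) x
  have hηc : Continuous η := by
    rw [continuous_iff_continuousAt]; exact fun x => (hηd x).continuousAt
  have hηnn : ∀ x, 0 ≤ η x := fun x => setIntegral_nonneg measurableSet_Iic fun y _ => hgnn y
  have hηA : ∀ x, η x ≤ A := fun x => setIntegral_le_integral hg (Filter.Eventually.of_forall hgnn)
  set w : ℝ → ℝ := fun x => (1 + max x 0) * exp (2 * η x) with hwdef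
  have hwc : Continuous w := by fun_prop
  have hw1 : ∀ x, 1 ≤ w x := by
    intro x
    have h1 : (1:ℝ) ≤ 1 + max x 0 := by simp [le_max_right]
    have h2 : (1:ℝ) ≤ exp (2 * η x) := one_le_exp (by linarith [hηnn x])
    simp only [hwdef]
    nlinarith
  have hwpos : ∀ x, 0 < w x := fun x => lt_of_lt_of_le one_pos (hw1 x)
  have hwle : ∀ x, w x ≤ (1 + max x 0) * exp (2 * A) :=
    fun x => mul_le_mul_of_nonneg_left (exp_le_exp.2 (by linarith [hηA x]))
      (by nlinarith [le_max_right x 0])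
  have hgeInt : Integrable (fun y => g y * exp (2 * η y)) := by
    apply Integrable.mono' (hg.const_mul (exp (2*A))) ((hgc.mul (by fun_prop)).aestronglyMeasurable)
    refine Filter.Eventually.of_forall fun y => ?_
    show ‖g y * exp (2 * η y)‖ ≤ exp (2*A) * g y
    rw [Real.norm_eq_abs, abs_mul, abs_of_nonneg (hgnn y), abs_of_nonneg (exp_pos _).le]
    calc g y * exp (2 * η y) ≤ g y * exp (2 * A) :=
          mul_le_mul_of_nonneg_left (exp_le_exp.2 (by linarith [hηA y])) (hgnn y)
      _ = exp (2*A) * g y := by ring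
  have hexpbound : ∀ x, ∫ y in Iic x, g y * exp (2 * η y) ≤ exp (2 * η x) / 2 := by
    intro x
    have hF : ∀ y : ℝ, HasDerivAt (fun t => exp (2 * η t) / 2) (g y * exp (2 * η y)) y := by
      intro y
      have h1 : HasDerivAt (fun t => 2 * η t) (2 * g y) y := (hηd y).const_mul 2
      have h2 := h1.exp.div_const 2
      refine h2.congr_deriv ?_
      ring
    have h2 := intervalIntegral_tendsto_integral_Iic x hgeInt.integrableOn
      (tendsto_id (α := ℝ) (x := atBot))
    refine le_of_tendsto h2 ?_
    filter_upwards [eventually_le_atBot x] with b hb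
    have hIoc : ∫ y in b..x, g y * exp (2 * η y) = exp (2*η x)/2 - exp (2*η b)/2 :=
      intervalIntegral.integral_eq_sub_of_hasDerivAt (fun y _ => hF y)
        ((hgc.mul (by fun_prop)).intervalIntegrable b x)
    simp only [id_eq]
    rw [hIoc]
    have := one_le_exp (show (0:ℝ) ≤ 2 * η b by linarith [hηnn b])
    linarith
  -- pointwise kernel bounds involving w
  have hfb : ∀ (f : ℝ →ᵇ ℝ) (y : ℝ), |f y| ≤ ‖f‖ := fun f y => by
    simpa [Real.norm_eq_abs] using f.norm_coe_le_norm y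
  have hwk : ∀ {x y : ℝ}, y ≤ x →
      (x - y) * w y ≤ (1 + max x 0) * ((1 + |y|) * exp (2 * η y)) := by
    intro x y hyx
    calc (x - y) * w y = ((x - y) * (1 + max y 0)) * exp (2 * η y) := by
          simp only [hwdef]; ring
      _ ≤ ((1 + max x 0) * (1 + |y|)) * exp (2 * η y) :=
          mul_le_mul_of_nonneg_right (kernel_bound hyx) (exp_pos _).le
      _ = (1 + max x 0) * ((1 + |y|) * exp (2 * η y)) := by ring
  have hwy : ∀ {x y : ℝ}, y ≤ x →
      |y| * w y ≤ (1 + |x|) * ((1 + |y|) * exp (2 * A)) := by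
    intro x y hyx
    calc |y| * w y = (|y| * (1 + max y 0)) * exp (2 * η y) := by
          simp only [hwdef]; ring
      _ ≤ ((1 + |x|) * (1 + |y|)) * exp (2 * A) := by
          refine mul_le_mul (abs_kernel_bound hyx) (exp_le_exp.2 (by linarith [hηA y]))
            (exp_pos _).le ?_
          positivity
      _ = (1 + |x|) * ((1 + |y|) * exp (2 * A)) := by ring
  -- the integrand map
  set u : (ℝ →ᵇ ℝ) → ℝ → ℝ := fun f y => V y * (w y * f y) with hudef
  have huc : ∀ f, Continuous (u f) := fun f => hV.mul (hwc.mul f.continuous)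
  have huint : ∀ f, Integrable (u f) := by
    intro f
    apply Integrable.mono' (hg.const_mul (exp (2*A) * ‖f‖))
      ((huc f).aestronglyMeasurable)
    refine Filter.Eventually.of_forall fun y => ?_
    have e1 : ‖u f y‖ = V y * (w y * |f y|) := by
      simp only [hudef, Real.norm_eq_abs, abs_mul, abs_of_nonneg (hVnn y),
        abs_of_nonneg (hwpos y).le]
    rw [e1]
    have h2 : w y ≤ (1 + |y|) * exp (2*A) := by
      refine (hwle y).trans ?_
      have : max y 0 ≤ |y| := max_le (le_abs_self y) (abs_nonneg y)
      nlinarith [exp_pos (2*A)]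
    calc V y * (w y * |f y|) ≤ V y * ((1 + |y|) * exp (2*A) * ‖f‖) :=
          mul_le_mul_of_nonneg_left
            (mul_le_mul h2 (hfb f y) (abs_nonneg _) (by positivity)) (hVnn y)
      _ = exp (2*A) * ‖f‖ * g y := by simp only [hgdef]; ring
  have hyint : ∀ (f : ℝ →ᵇ ℝ) (x : ℝ), IntegrableOn (fun y => y * u f y) (Iic x) := by
    intro f x
    apply Integrable.mono' ((hg.const_mul (exp (2*A) * ‖f‖ * (1 + |x|))).integrableOn)
      ((continuous_id.mul (huc f)).aestronglyMeasurable.restrict)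
    rw [ae_restrict_iff' measurableSet_Iic]
    refine Filter.Eventually.of_forall fun y hy => ?_
    show ‖y * u f y‖ ≤ _
    have e1 : ‖y * u f y‖ = (|y| * w y) * (V y * |f y|) := by
      simp only [hudef, Real.norm_eq_abs, abs_mul, abs_of_nonneg (hVnn y),
        abs_of_nonneg (hwpos y).le]
      ring
    rw [e1]
    calc (|y| * w y) * (V y * |f y|)
        ≤ ((1 + |x|) * ((1 + |y|) * exp (2*A))) * (V y * ‖f‖) :=
          mul_le_mul (hwy (mem_Iic.1 hy)) (mul_le_mul_of_nonneg_left (hfb f y) (hVnn y))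
            (mul_nonneg (hVnn y) (abs_nonneg _)) (by positivity)
      _ = exp (2*A) * ‖f‖ * (1 + |x|) * g y := by simp only [hgdef]; ring
  have hkint : ∀ (f : ℝ →ᵇ ℝ) (x : ℝ),
      IntegrableOn (fun y => (x - y) * u f y) (Iic x) := by
    intro f x
    have e : (fun y => (x - y) * u f y) = fun y => x * u f y - y * u f y :=
      funext fun y => by ring
    rw [e]
    exact ((huint f).const_mul x).integrableOn.sub (hyint f x)
  set I : (ℝ →ᵇ ℝ) → ℝ → ℝ := fun f x => ∫ y in Iic x, (x - y) * u f y with hIdef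
  have hIc : ∀ f, Continuous (I f) := by
    intro f
    have hsplit : I f = fun x => x * (∫ y in Iic x, u f y) - ∫ y in Iic x, y * u f y := by
      funext x
      simp only [hIdef]
      exact split_integral (huint f) (hyint f x)
    rw [hsplit]
    have c1 : Continuous fun x => ∫ y in Iic x, u f y := by
      rw [continuous_iff_continuousAt]
      exact fun x => (hasDerivAt_integral_Iic (huc f)
        (fun _ => (huint f).integrableOn) x).continuousAt
    have c2 : Continuous fun x => ∫ y in Iic x, y * u f y := by
      rw [continuous_iff_continuousAt]
      exact fun x => (hasDerivAt_integral_Iic (continuous_id.mul (huc f))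
        (hyint f) x).continuousAt
    exact (continuous_id.mul c1).sub c2
  have hIbound : ∀ (f : ℝ →ᵇ ℝ) (x : ℝ), |I f x| ≤ ‖f‖ * w x / 2 := by
    intro f x
    have hdom : IntegrableOn
        (fun y => ‖f‖ * ((1 + max x 0) * (g y * exp (2*η y)))) (Iic x) :=
      ((hgeInt.const_mul (1 + max x 0)).const_mul (‖f‖)).integrableOn
    have hpt : ∀ᵐ y ∂(volume.restrict (Iic x)),
        ‖(x - y) * u f y‖ ≤ ‖f‖ * ((1 + max x 0) * (g y * exp (2*η y))) := by
      rw [ae_restrict_iff' measurableSet_Iic]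
      refine Filter.Eventually.of_forall fun y hy => ?_
      have e1 : ‖(x - y) * u f y‖ = ((x - y) * w y) * (V y * |f y|) := by
        simp only [hudef, Real.norm_eq_abs, abs_mul, abs_of_nonneg (hVnn y),
          abs_of_nonneg (hwpos y).le, abs_of_nonneg (sub_nonneg.2 (mem_Iic.1 hy))]
        ring
      rw [e1]
      calc ((x - y) * w y) * (V y * |f y|)
          ≤ ((1 + max x 0) * ((1 + |y|) * exp (2*η y))) * (V y * ‖f‖) := by
            refine mul_le_mul (hwk (mem_Iic.1 hy)) (mul_le_mul_of_nonneg_left (hfb f y) (hVnn y))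
              (mul_nonneg (hVnn y) (abs_nonneg _)) ?_
            exact mul_nonneg (by nlinarith [le_max_right x 0])
              (mul_nonneg (by positivity) (exp_pos _).le)
        _ = ‖f‖ * ((1 + max x 0) * (g y * exp (2*η y))) := by simp only [hgdef]; ring
    calc |I f x| ≤ ∫ y in Iic x, ‖f‖ * ((1 + max x 0) * (g y * exp (2*η y))) := by
          simp only [hIdef, ← Real.norm_eq_abs]
          exact norm_integral_le_of_norm_le hdom hpt
      _ = (‖f‖ * (1 + max x 0)) * ∫ y in Iic x, g y * exp (2*η y) := by
          rw [integral_const_mul, integral_const_mul]; ring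
      _ ≤ (‖f‖ * (1 + max x 0)) * (exp (2 * η x) / 2) := by
          refine mul_le_mul_of_nonneg_left (hexpbound x) ?_
          nlinarith [le_max_right x 0, norm_nonneg f]
      _ = ‖f‖ * w x / 2 := by simp only [hwdef]; ring
  have hInn : ∀ (f : ℝ →ᵇ ℝ), (∀ y, 0 ≤ f y) → ∀ x, 0 ≤ I f x := by
    intro f hf x
    refine setIntegral_nonneg measurableSet_Iic fun y hy => ?_
    exact mul_nonneg (sub_nonneg.2 hy)
      (mul_nonneg (hVnn y) (mul_nonneg (hwpos y).le (hf y)))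
  have hIsub : ∀ (f₁ f₂ : ℝ →ᵇ ℝ) (x : ℝ), I f₁ x - I f₂ x = I (f₁ - f₂) x := by
    intro f₁ f₂ x
    simp only [hIdef]
    rw [← integral_sub (hkint f₁ x) (hkint f₂ x)]
    congr 1
    funext y
    simp only [hudef, BoundedContinuousFunction.coe_sub, Pi.sub_apply]
    ring
  -- the contraction operator
  have hTb : ∀ (f : ℝ →ᵇ ℝ) (x : ℝ), ‖(1 + I f x) / w x‖ ≤ 1 + ‖f‖ / 2 := by
    intro f x
    rw [Real.norm_eq_abs, abs_div, abs_of_nonneg (hwpos x).le, div_le_iff₀ (hwpos x)]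
    have h1 := hIbound f x
    have h2 := hw1 x
    have h3 : |1 + I f x| ≤ 1 + |I f x| := (abs_add_le _ _).trans (by simp)
    have hf0 : 0 ≤ ‖f‖ := norm_nonneg f
    nlinarith [abs_nonneg (I f x), le_abs_self (I f x)]
  set T : (ℝ →ᵇ ℝ) → (ℝ →ᵇ ℝ) := fun f =>
    BoundedContinuousFunction.ofNormedAddCommGroup (fun x => (1 + I f x) / w x)
      ((continuous_const.add (hIc f)).div hwc fun x => (hwpos x).ne') (1 + ‖f‖/2) (hTb f)
    with hTdef
  have hTapp : ∀ (f : ℝ →ᵇ ℝ) (x : ℝ), T f x = (1 + I f x) / w x := fun f x => rfl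
  have hTlip : ∀ f₁ f₂ : ℝ →ᵇ ℝ, dist (T f₁) (T f₂) ≤ (1/2) * dist f₁ f₂ := by
    intro f₁ f₂
    refine (BoundedContinuousFunction.dist_le (by positivity)).2 fun x => ?_
    rw [Real.dist_eq, hTapp, hTapp, div_sub_div_same,
      show (1 + I f₁ x) - (1 + I f₂ x) = I (f₁ - f₂) x from by rw [← hIsub f₁ f₂ x]; ring,
      abs_div, abs_of_nonneg (hwpos x).le]
    calc |I (f₁ - f₂) x| / w x ≤ (‖f₁ - f₂‖ * w x / 2) / w x := by
          gcongr
          exact hIbound _ x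
      _ = ‖f₁ - f₂‖ / 2 := by field_simp [(hwpos x).ne']
      _ = (1/2) * dist f₁ f₂ := by rw [dist_eq_norm]; ring
  -- the invariant closed set
  set S : Set (ℝ →ᵇ ℝ) := {f | ∀ x, 1 ≤ w x * f x} with hSdef
  have hSclosed : IsClosed S := by
    have e : S = ⋂ x, {f : ℝ →ᵇ ℝ | 1 ≤ w x * f x} := by
      ext f; simp [hSdef, mem_iInter]
    rw [e]
    exact isClosed_iInter fun x => isClosed_le continuous_const
      (continuous_const.mul (continuous_eval_const x))
  have hSmaps : MapsTo T S S := by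
    intro f hf x
    have hf0 : ∀ y, 0 ≤ f y := by
      intro y
      have h1 := hf y
      nlinarith [hwpos y]
    have e : w x * T f x = 1 + I f x := by
      rw [hTapp, mul_comm, div_mul_cancel₀ _ (hwpos x).ne']
    have h2 := hInn f hf0 x
    show 1 ≤ w x * T f x
    rw [e]
    linarith
  have hone : BoundedContinuousFunction.const ℝ (1:ℝ) ∈ S := by
    simp only [hSdef, mem_setOf_eq]
    intro x
    simpa using hw1 x
  haveI : Nonempty S := ⟨⟨_, hone⟩⟩
  haveI : CompleteSpace S := hSclosed.completeSpace_coe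
  have hcontr : ContractingWith (1/2 : NNReal) (hSmaps.restrict T S S) := by
    constructor
    · rw [show ((1:NNReal)/2 : NNReal) < 1 ↔ ((1:NNReal)/2 : ℝ) < 1 from by
        exact_mod_cast Iff.rfl]
      norm_num
    · apply LipschitzWith.of_dist_le_mul
      intro a b
      have h := hTlip a.1 b.1
      rw [Subtype.dist_eq, Subtype.dist_eq]
      simp only [MapsTo.val_restrict_apply]
      refine h.trans ?_
      have e : ((1/2 : NNReal) : ℝ) = 1/2 := by norm_num
      rw [e]
  set F := ContractingWith.fixedPoint (hSmaps.restrict T S S) hcontr with hFdef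
  have hFfix : hSmaps.restrict T S S F = F := hcontr.fixedPoint_isFixedPt
  set f : ℝ →ᵇ ℝ := (F : ℝ →ᵇ ℝ) with hfdef
  have hfix : T f = f := by
    have := congrArg Subtype.val hFfix
    simpa using this
  have hfS : ∀ x, 1 ≤ w x * f x := F.2
  refine ⟨fun x => w x * f x, ‖f‖ * exp (2*A), hwc.mul f.continuous, hfS, ?_, ?_⟩
  · intro x
    calc w x * f x ≤ w x * ‖f‖ :=
          mul_le_mul_of_nonneg_left (le_trans (le_abs_self _) (hfb f x)) (hwpos x).le
      _ ≤ ((1 + max x 0) * exp (2*A)) * ‖f‖ :=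
          mul_le_mul_of_nonneg_right (hwle x) (norm_nonneg f)
      _ = ‖f‖ * exp (2*A) * (1 + max x 0) := by ring
  · intro x
    show w x * f x = 1 + ∫ y in Iic x, (x - y) * (V y * (w y * f y))
    have h1 : T f x = f x := by rw [hfix]
    rw [hTapp] at h1
    rw [div_eq_iff (hwpos x).ne'] at h1
    have h2 : w x * f x = 1 + I f x := by linarith
    rw [h2]
/-- For `V` continuous, bounded, nonnegative with `0 < ∫ |x| V(x) dx < ∞`,
there exists a positive increasing `C²` solution `ψ₁` of `-ψ'' + Vψ = 0` with
`ψ₁(x) → 1` and `x ψ₁'(x) → 0` as `x → -∞`. -/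
theorem exists_increasing_harmonic (V : ℝ → ℝ)
    (hV : Continuous V) (hVbdd : ∃ M, ∀ x, V x ≤ M) (hVnn : ∀ x, 0 ≤ V x)
    (hint : Integrable (fun x => |x| * V x))
    (hpos : 0 < ∫ x : ℝ, |x| * V x) :
    ∃ ψ₁ : ℝ → ℝ, ContDiff ℝ 2 ψ₁ ∧ (∀ x, 0 < ψ₁ x) ∧ Monotone ψ₁ ∧
      (∀ x, deriv (deriv ψ₁) x = V x * ψ₁ x) ∧
      Tendsto ψ₁ atBot (nhds 1) ∧
      Tendsto (fun x => x * deriv ψ₁ x) atBot (nhds 0) := by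
  obtain ⟨M, hM⟩ := hVbdd
  -- V is integrable
  have hind : Integrable (Set.indicator (Icc (-1:ℝ) 1) (fun _ => M)) := by
    refine (integrableOn_const ?_).integrable_indicator measurableSet_Icc
    exact measure_Icc_lt_top.ne
  have hVint : Integrable V := by
    apply Integrable.mono' (hind.add hint) hV.aestronglyMeasurable
    refine Filter.Eventually.of_forall fun x => ?_
    rw [Real.norm_eq_abs, abs_of_nonneg (hVnn x), Pi.add_apply]
    by_cases hx : x ∈ Icc (-1:ℝ) 1
    · rw [indicator_of_mem hx]
      have h0 : 0 ≤ |x| * V x := mul_nonneg (abs_nonneg x) (hVnn x)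
      linarith [hM x]
    · rw [indicator_of_notMem hx]
      have h1 : 1 ≤ |x| := by
        by_contra h
        push_neg at h
        exact hx ⟨by linarith [neg_abs_le x], by linarith [le_abs_self x]⟩
      have := le_mul_of_one_le_left (hVnn x) h1
      linarith
  have hgInt : Integrable (fun y => (1 + |y|) * V y) := by
    have e : (fun y => (1 + |y|) * V y) = fun y => V y + |y| * V y := funext fun y => by ring
    rw [e]
    exact hVint.add hint
  obtain ⟨ψ, C, hψc, hψ1, hψle, hψeq⟩ := exists_fixed V hV hVnn hgInt
  have hC1 : 1 ≤ C := by nlinarith [hψle 0, hψ1 0, max_self (0:ℝ)]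
  have hψpos : ∀ x, 0 < ψ x := fun x => lt_of_lt_of_le one_pos (hψ1 x)
  set q : ℝ → ℝ := fun y => V y * ψ y with hqdef
  have hqc : Continuous q := hV.mul hψc
  have hqnn : ∀ y, 0 ≤ q y := fun y => mul_nonneg (hVnn y) (hψpos y).le
  have hψle0 : ∀ y, y ≤ 0 → ψ y ≤ C := by
    intro y hy
    have h1 := hψle y
    rw [max_eq_right hy] at h1
    simpa using h1
  have hqb : ∀ y, q y ≤ C * ((1 + |y|) * V y) := by
    intro y
    have h1 := mul_le_mul_of_nonneg_left (hψle y) (hVnn y)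
    have h2 : max y 0 ≤ |y| := max_le (le_abs_self y) (abs_nonneg y)
    have h3 : (C * V y) * max y 0 ≤ (C * V y) * |y| :=
      mul_le_mul_of_nonneg_left h2 (mul_nonneg (by linarith) (hVnn y))
    show V y * ψ y ≤ C * ((1 + |y|) * V y)
    nlinarith [h1, h3]
  have hqint : Integrable q :=
    (hgInt.const_mul C).mono' hqc.aestronglyMeasurable
      (Filter.Eventually.of_forall fun y => by
        rw [Real.norm_eq_abs, abs_of_nonneg (hqnn y)]; exact hqb y)
  have hyqint : ∀ x : ℝ, IntegrableOn (fun y => y * q y) (Iic x) := by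
    intro x
    apply Integrable.mono' ((hgInt.const_mul (C * (1 + |x|))).integrableOn)
      ((continuous_id.mul hqc).aestronglyMeasurable.restrict)
    rw [ae_restrict_iff' measurableSet_Iic]
    refine Filter.Eventually.of_forall fun y hy => ?_
    show ‖y * q y‖ ≤ _
    rw [Real.norm_eq_abs, abs_mul, abs_of_nonneg (hqnn y)]
    have h1 : q y ≤ (C * (1 + max y 0)) * V y := by
      have h0 := mul_le_mul_of_nonneg_left (hψle y) (hVnn y)
      show V y * ψ y ≤ (C * (1 + max y 0)) * V y
      nlinarith [h0]
    calc |y| * q y ≤ |y| * ((C * (1 + max y 0)) * V y) :=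
          mul_le_mul_of_nonneg_left h1 (abs_nonneg y)
      _ = C * ((|y| * (1 + max y 0)) * V y) := by ring
      _ ≤ C * (((1 + |x|) * (1 + |y|)) * V y) :=
          mul_le_mul_of_nonneg_left
            (mul_le_mul_of_nonneg_right (abs_kernel_bound (mem_Iic.1 hy)) (hVnn y))
            (by linarith)
      _ = C * (1 + |x|) * ((1 + |y|) * V y) := by ring
  have hkqint : ∀ x : ℝ, IntegrableOn (fun y => (x - y) * (V y * ψ y)) (Iic x) := by
    intro x
    have e : (fun y => (x - y) * (V y * ψ y)) = fun y => x * q y - y * q y :=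
      funext fun y => by simp only [hqdef]; ring
    rw [e]
    exact ((hqint.const_mul x).integrableOn).sub (hyqint x)
  set D : ℝ → ℝ := fun x => ∫ y in Iic x, q y with hDdef
  have hDd : ∀ x, HasDerivAt D (q x) x := fun x =>
    hasDerivAt_integral_Iic hqc (fun _ => hqint.integrableOn) x
  have hDnn : ∀ x, 0 ≤ D x := fun x =>
    setIntegral_nonneg measurableSet_Iic fun y _ => hqnn y
  have hψd : ∀ x, HasDerivAt ψ (D x) x := by
    intro x
    have hsplit : ψ = fun t => 1 + (t * D t - ∫ y in Iic t, y * q y) := by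
      funext t
      rw [hψeq t]
      congr 1
      simp only [hDdef]
      exact split_integral hqint (hyqint t)
    rw [hsplit]
    have hK : HasDerivAt (fun t => ∫ y in Iic t, y * q y) (x * q x) x :=
      hasDerivAt_integral_Iic (continuous_id.mul hqc) hyqint x
    have h1 : HasDerivAt (fun t => t * D t) (1 * D x + x * q x) x :=
      (hasDerivAt_id x).mul (hDd x)
    have h2 := (h1.sub hK).const_add 1
    refine h2.congr_deriv ?_
    ring
  have hderiv : deriv ψ = D := funext fun x => (hψd x).deriv
  have htail : Tendsto (fun x => ∫ y in Iic x, C * ((1+|y|) * V y)) atBot (𝓝 0) :=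
    tendsto_integral_Iic_atBot' (hgInt.const_mul C)
  refine ⟨ψ, ?_, hψpos, ?_, ?_, ?_, ?_⟩
  · -- C²
    have hDc1 : ContDiff ℝ 1 D := contDiff_one_iff_deriv.2
      ⟨fun x => (hDd x).differentiableAt, by
        rw [funext fun x => (hDd x).deriv]; exact hqc⟩
    have e2 : (2 : WithTop ℕ∞) = 1 + 1 := by norm_num
    rw [e2]
    refine contDiff_succ_iff_deriv.2
      ⟨fun x => (hψd x).differentiableAt, by simp, by rw [hderiv]; exact hDc1⟩
  · exact monotone_of_deriv_nonneg (fun x => (hψd x).differentiableAt)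
      (by rw [hderiv]; exact hDnn)
  · intro x
    rw [hderiv]
    exact (hDd x).deriv
  · rw [tendsto_iff_dist_tendsto_zero]
    refine squeeze_zero' (Filter.Eventually.of_forall fun t => dist_nonneg) ?_ htail
    filter_upwards [eventually_le_atBot (0:ℝ)] with x hx
    rw [Real.dist_eq]
    have hnn : 0 ≤ ∫ y in Iic x, (x - y) * (V y * ψ y) :=
      setIntegral_nonneg measurableSet_Iic fun y hy =>
        mul_nonneg (sub_nonneg.2 (mem_Iic.1 hy)) (mul_nonneg (hVnn y) (hψpos y).le)
    have habs : |ψ x - 1| = ∫ y in Iic x, (x - y) * (V y * ψ y) := by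
      rw [hψeq x, add_sub_cancel_left]
      exact abs_of_nonneg hnn
    rw [habs]
    refine setIntegral_mono_on (hkqint x) ((hgInt.const_mul C).integrableOn)
      measurableSet_Iic fun y hy => ?_
    have hyx : y ≤ x := mem_Iic.1 hy
    have hy0 : y ≤ 0 := hyx.trans hx
    have h1 : x - y ≤ |y| := by rw [abs_of_nonpos hy0]; linarith
    have h2 : ψ y ≤ C := hψle0 y hy0
    have h3 : (x - y) * (V y * ψ y) ≤ |y| * (V y * C) :=
      mul_le_mul h1 (mul_le_mul_of_nonneg_left h2 (hVnn y))
        (mul_nonneg (hVnn y) (hψpos y).le) (abs_nonneg y)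
    nlinarith [h3, mul_nonneg (hVnn y) (abs_nonneg y), hVnn y]
  · rw [hderiv]
    rw [tendsto_iff_dist_tendsto_zero]
    refine squeeze_zero' (Filter.Eventually.of_forall fun t => dist_nonneg) ?_ htail
    filter_upwards [eventually_le_atBot (0:ℝ)] with x hx
    rw [Real.dist_eq, sub_zero, abs_mul, abs_of_nonneg (hDnn x)]
    have e1 : |x| * D x = ∫ y in Iic x, |x| * q y := by
      simp only [hDdef]
      rw [integral_const_mul]
    rw [e1]
    refine setIntegral_mono_on ((hqint.const_mul |x|).integrableOn)
      ((hgInt.const_mul C).integrableOn) measurableSet_Iic fun y hy => ?_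
    have hyx : y ≤ x := mem_Iic.1 hy
    have hy0 : y ≤ 0 := hyx.trans hx
    have h1 : |x| ≤ |y| := by
      rw [abs_of_nonpos hx, abs_of_nonpos hy0]
      linarith
    have h2 : ψ y ≤ C := hψle0 y hy0
    have h3 : |x| * q y ≤ |y| * (V y * C) := by
      refine mul_le_mul h1 ?_ (hqnn y) (abs_nonneg y)
      exact mul_le_mul_of_nonneg_left h2 (hVnn y)
    nlinarith [h3, mul_nonneg (hVnn y) (abs_nonneg y), hVnn y]
end

section
/- Let V ∈ 𝒱 with associated ψ₁, ψ₂, ψ_* = (ψ₁ψ₂)^{1/2} and Wronskian k > 0. Let β ∈ [0,1). Then for every f ∈ C_0^2(ℝ), (1-β²)(k²/4) ∫_ℝ f²/ψ_*^{4+2β} dx ≤ ∫_ℝ (Sf) f ψ_*^{-2β} dx, where Sf = -f'' + Vf. -/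
open MeasureTheory Real Filter Set

lemma key_alg (V F Fp Fpp U Up Upp k b P : ℝ) (hU : U ≠ 0) (hP : P ≠ 0)
    (hV : 4 * V * U ^ 2 = 2 * U * Upp - Up ^ 2 + k ^ 2) :
    (-Fpp + V * F) * F / P - (1 - b ^ 2) * (k ^ 2 / 4) * (F ^ 2 / (U ^ 2 * P)) =
      ((Fp - (1 + b) / 2 * F * Up / U) ^ 2 / P
        + b ^ 2 / 4 * (k ^ 2 - Up ^ 2) * (F ^ 2 / (U ^ 2 * P)))
      + ((-(Fpp * F + Fp * Fp)
            + (((Fp * F + F * Fp) * Up + F * F * Upp) * (2 * U)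
                - F * F * Up * (2 * Up)) / (2 * U) ^ 2) * (1 / P)
          + (-(Fp * F) + F * F * Up / (2 * U)) * (Up * (-b) * (1 / (P * U)))) := by
  have hVval : V = (2 * U * Upp - Up ^ 2 + k ^ 2) / (4 * U ^ 2) := by
    field_simp
    linarith [hV]
  rw [hVval]
  field_simp
  ring

lemma main_ineq (V u : ℝ → ℝ) (k β : ℝ) (hVc : Continuous V)
    (hu : ContDiff ℝ 2 u) (hupos : ∀ x, 0 < u x)
    (hVu : ∀ x, 4 * V x * u x ^ 2
      = 2 * u x * deriv (deriv u) x - deriv u x ^ 2 + k ^ 2)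
    (hup : ∀ x, deriv u x ^ 2 ≤ k ^ 2)
    (f : ℝ → ℝ) (hf : ContDiff ℝ 2 f) (hfc : HasCompactSupport f) :
    (1 - β ^ 2) * (k ^ 2 / 4) * ∫ x : ℝ, f x ^ 2 / (u x ^ 2 * u x ^ β)
      ≤ ∫ x : ℝ, (-deriv (deriv f) x + V x * f x) * f x / u x ^ β := by
  have h11 : (2 : WithTop ℕ∞) = 1 + 1 := by norm_num
  -- basic differentiability
  have hfd : Differentiable ℝ f := hf.differentiable two_ne_zero
  have hud : Differentiable ℝ u := hu.differentiable two_ne_zero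
  have hf1 : ContDiff ℝ 1 f := hf.of_le one_le_two
  have hu1 : ContDiff ℝ 1 u := hu.of_le one_le_two
  have hdf : ContDiff ℝ 1 (deriv f) := (contDiff_succ_iff_deriv.mp (h11 ▸ hf)).2.2
  have hdu : ContDiff ℝ 1 (deriv u) := (contDiff_succ_iff_deriv.mp (h11 ▸ hu)).2.2
  have hdfd : Differentiable ℝ (deriv f) := hdf.differentiable one_ne_zero
  have hdud : Differentiable ℝ (deriv u) := hdu.differentiable one_ne_zero
  have hcf : Continuous f := hf.continuous
  have hcu : Continuous u := hu.continuous
  have hcf' : Continuous (deriv f) := hdf.continuous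
  have hcu' : Continuous (deriv u) := hdu.continuous
  have hcf'' : Continuous (deriv (deriv f)) := hdf.continuous_deriv le_rfl
  have hcu'' : Continuous (deriv (deriv u)) := hdu.continuous_deriv le_rfl
  have hune : ∀ x, u x ≠ 0 := fun x => (hupos x).ne'
  have hPpos : ∀ x, (0:ℝ) < u x ^ β := fun x => Real.rpow_pos_of_pos (hupos x) β
  have hPne : ∀ x, u x ^ β ≠ 0 := fun x => (hPpos x).ne'
  have hcP : Continuous fun x => u x ^ β :=
    hcu.rpow_const fun x => Or.inl (hune x)
  -- the functions D and N
  set D : ℝ → ℝ := fun y =>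
    (-(deriv f y * f y) + f y * f y * deriv u y / (2 * u y)) * u y ^ (-β : ℝ)
    with hDdef
  set N : ℝ → ℝ := fun x =>
    (deriv f x - (1 + β) / 2 * f x * deriv u x / u x) ^ 2 / u x ^ β
      + β ^ 2 / 4 * (k ^ 2 - deriv u x ^ 2) * (f x ^ 2 / (u x ^ 2 * u x ^ β))
    with hNdef
  -- derivative of D
  have hDD : ∀ x : ℝ, HasDerivAt D
      ((-(deriv (deriv f) x * f x + deriv f x * deriv f x)
          + (((deriv f x * f x + f x * deriv f x) * deriv u x
                + f x * f x * deriv (deriv u) x) * (2 * u x)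
              - f x * f x * deriv u x * (2 * deriv u x)) / (2 * u x) ^ 2)
          * u x ^ (-β : ℝ)
        + (-(deriv f x * f x) + f x * f x * deriv u x / (2 * u x))
          * (deriv u x * (-β) * u x ^ ((-β : ℝ) - 1))) x := by
    intro x
    have hfx : HasDerivAt f (deriv f x) x := (hfd x).hasDerivAt
    have hfx' : HasDerivAt (deriv f) (deriv (deriv f) x) x := (hdfd x).hasDerivAt
    have hux : HasDerivAt u (deriv u x) x := (hud x).hasDerivAt
    have hux' : HasDerivAt (deriv u) (deriv (deriv u) x) x := (hdud x).hasDerivAt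
    have hden : HasDerivAt (fun y => 2 * u y) (2 * deriv u x) x := hux.const_mul 2
    have hnum : HasDerivAt (fun y => f y * f y * deriv u y)
        ((deriv f x * f x + f x * deriv f x) * deriv u x
          + f x * f x * deriv (deriv u) x) x := (hfx.mul hfx).mul hux'
    have hq := hnum.div hden (mul_pos two_pos (hupos x)).ne'
    have hg := ((hfx'.mul hfx).neg).add hq
    have hA : HasDerivAt (fun y => u y ^ (-β : ℝ))
        (deriv u x * (-β) * u x ^ ((-β : ℝ) - 1)) x :=
      hux.rpow_const (Or.inl (hune x))
    exact hg.mul hA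
  -- key pointwise identity
  have key : ∀ x : ℝ,
      (-deriv (deriv f) x + V x * f x) * f x / u x ^ β
        - (1 - β ^ 2) * (k ^ 2 / 4) * (f x ^ 2 / (u x ^ 2 * u x ^ β))
      = N x + deriv D x := by
    intro x
    rw [(hDD x).deriv]
    have e1 : u x ^ (-β : ℝ) = 1 / u x ^ β := by
      rw [Real.rpow_neg (hupos x).le, one_div]
    have e2 : u x ^ ((-β : ℝ) - 1) = 1 / (u x ^ β * u x) := by
      rw [show (-β - 1 : ℝ) = -(β + 1) by ring, Real.rpow_neg (hupos x).le,
        Real.rpow_add (hupos x), Real.rpow_one, one_div]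
    rw [hNdef, e1, e2]
    exact key_alg (V x) (f x) (deriv f x) (deriv (deriv f) x) (u x) (deriv u x)
      (deriv (deriv u) x) k β (u x ^ β) (hune x) (hPne x) (hVu x)
  -- support facts
  have hsuppD : HasCompactSupport D := by
    refine hfc.mono' (Function.support_subset_iff'.2 fun x hx => ?_)
    have h1 : f x = 0 := image_eq_zero_of_notMem_tsupport hx
    have h2 : deriv f x = 0 :=
      Function.notMem_support.1 fun hmem => hx (support_deriv_subset hmem)
    simp [hDdef, h1, h2]
  have hsuppN : HasCompactSupport N := by
    refine hfc.mono' (Function.support_subset_iff'.2 fun x hx => ?_)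
    have h1 : f x = 0 := image_eq_zero_of_notMem_tsupport hx
    have h2 : deriv f x = 0 :=
      Function.notMem_support.1 fun hmem => hx (support_deriv_subset hmem)
    simp [hNdef, h1, h2]
  -- D is C¹
  have hDc1 : ContDiff ℝ 1 D := by
    rw [hDdef]
    exact (((hdf.mul hf1).neg).add (((hf1.mul hf1).mul hdu).div
        (contDiff_const.mul hu1) fun x => (mul_pos two_pos (hupos x)).ne')).mul
      (hu1.rpow_const_of_ne hune)
  have hcD' : Continuous (deriv D) := hDc1.continuous_deriv le_rfl
  have hintD' : Integrable (deriv D) := hcD'.integrable_of_hasCompactSupport hsuppD.deriv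
  have hzero : ∫ x : ℝ, deriv D x = 0 := by
    rw [← intervalIntegral.integral_Iic_add_Ioi (b := (0:ℝ)) hintD'.integrableOn hintD'.integrableOn,
      HasCompactSupport.integral_Iic_deriv_eq hDc1 hsuppD 0,
      HasCompactSupport.integral_Ioi_deriv_eq hDc1 hsuppD 0]
    ring
  -- integrability of the integrands
  have hw1 : Integrable fun x => (-deriv (deriv f) x + V x * f x) * f x / u x ^ β := by
    refine Continuous.integrable_of_hasCompactSupport
      (((hcf''.neg.add (hVc.mul hcf)).mul hcf).div hcP hPne) ?_
    refine hfc.mono' (Function.support_subset_iff'.2 fun x hx => ?_)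
    have h1 : f x = 0 := image_eq_zero_of_notMem_tsupport hx
    simp [h1]
  have hw2 : Integrable fun x => f x ^ 2 / (u x ^ 2 * u x ^ β) := by
    refine Continuous.integrable_of_hasCompactSupport
      ((hcf.pow 2).div ((hcu.pow 2).mul hcP) fun x => (mul_pos (pow_pos (hupos x) 2) (hPpos x)).ne') ?_
    refine hfc.mono' (Function.support_subset_iff'.2 fun x hx => ?_)
    have h1 : f x = 0 := image_eq_zero_of_notMem_tsupport hx
    simp [h1]
  have hcN : Continuous N := by
    rw [hNdef]
    refine Continuous.add ?_ ?_
    · exact ((hcf'.sub (((continuous_const.mul hcf).mul hcu').div hcu hune)).pow 2).div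
        hcP hPne
    · exact (continuous_const.mul ((continuous_const.sub (hcu'.pow 2)))).mul
        ((hcf.pow 2).div ((hcu.pow 2).mul hcP) fun x => (mul_pos (pow_pos (hupos x) 2) (hPpos x)).ne')
  have hintN : Integrable N := hcN.integrable_of_hasCompactSupport hsuppN
  have hNnn : 0 ≤ ∫ x : ℝ, N x := by
    refine integral_nonneg fun x => ?_
    rw [hNdef]
    refine add_nonneg (div_nonneg (sq_nonneg _) (hPpos x).le) ?_
    exact mul_nonneg (mul_nonneg (by positivity) (sub_nonneg.2 (hup x)))
      (div_nonneg (sq_nonneg _) (mul_pos (pow_pos (hupos x) 2) (hPpos x)).le)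
  -- assemble
  have hcalc : (∫ x : ℝ, (-deriv (deriv f) x + V x * f x) * f x / u x ^ β)
      - (1 - β ^ 2) * (k ^ 2 / 4) * ∫ x : ℝ, f x ^ 2 / (u x ^ 2 * u x ^ β)
      = ∫ x : ℝ, N x := by
    rw [← integral_const_mul, ← integral_sub hw1 (hw2.const_mul _)]
    rw [show (fun x => (-deriv (deriv f) x + V x * f x) * f x / u x ^ β
        - (1 - β ^ 2) * (k ^ 2 / 4) * (f x ^ 2 / (u x ^ 2 * u x ^ β)))
      = fun x => N x + deriv D x from funext key]
    rw [integral_add hintN hintD', hzero, add_zero]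
  linarith [hNnn, hcalc]

lemma deriv_nonneg_of_monotone {g : ℝ → ℝ} (hm : Monotone g)
    (hd : Differentiable ℝ g) (x : ℝ) : 0 ≤ deriv g x := by
  have h := (hd x).hasDerivAt
  rw [hasDerivAt_iff_tendsto_slope] at h
  refine ge_of_tendsto' h fun y => ?_
  rcases le_total x y with hxy | hxy
  · rw [slope_def_field, div_nonneg_iff]
    exact Or.inl ⟨sub_nonneg.2 (hm hxy), sub_nonneg.2 hxy⟩
  · rw [slope_def_field, div_nonneg_iff]
    exact Or.inr ⟨sub_nonpos.2 (hm hxy), sub_nonpos.2 hxy⟩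

lemma deriv_nonpos_of_antitone {g : ℝ → ℝ} (hm : Antitone g)
    (hd : Differentiable ℝ g) (x : ℝ) : deriv g x ≤ 0 := by
  have h := (hd x).hasDerivAt
  rw [hasDerivAt_iff_tendsto_slope] at h
  refine le_of_tendsto' h fun y => ?_
  rcases le_total x y with hxy | hxy
  · rw [slope_def_field, div_nonpos_iff]
    exact Or.inr ⟨sub_nonpos.2 (hm hxy), sub_nonneg.2 hxy⟩
  · rw [slope_def_field, div_nonpos_iff]
    exact Or.inl ⟨sub_nonneg.2 (hm hxy), sub_nonpos.2 hxy⟩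


/-- Weighted Hardy–Rellich type inequality: for `V ∈ 𝒱` with normalized
positive solutions `ψ₁, ψ₂`, `ψ_* = √(ψ₁ψ₂)`, Wronskian `k > 0` and
`β ∈ [0,1)`, every `f ∈ C₀²(ℝ)` satisfies
`(1-β²)(k²/4) ∫ f²/ψ_*^{4+2β} ≤ ∫ (Sf) f ψ_*^{-2β}` with `Sf = -f'' + Vf`. -/
theorem weighted_hardy_rellich (V ψ₁ ψ₂ : ℝ → ℝ) (k β : ℝ)
    (hV : Continuous V) (hVbdd : ∃ M, ∀ x, V x ≤ M) (hVnn : ∀ x, 0 ≤ V x)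
    (hint : Integrable (fun x => |x| * V x))
    (hpos : 0 < ∫ x : ℝ, |x| * V x)
    (h1 : ContDiff ℝ 2 ψ₁) (h2 : ContDiff ℝ 2 ψ₂)
    (h1pos : ∀ x, 0 < ψ₁ x) (h2pos : ∀ x, 0 < ψ₂ x)
    (h1mono : Monotone ψ₁) (h2anti : Antitone ψ₂)
    (heq1 : ∀ x, deriv (deriv ψ₁) x = V x * ψ₁ x)
    (heq2 : ∀ x, deriv (deriv ψ₂) x = V x * ψ₂ x)
    (hk : ∀ x, deriv ψ₁ x * ψ₂ x - ψ₁ x * deriv ψ₂ x = k) (hkpos : 0 < k)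
    (hβ0 : 0 ≤ β) (hβ1 : β < 1) :
    ∀ f : ℝ → ℝ, ContDiff ℝ 2 f → HasCompactSupport f →
      (1 - β ^ 2) * (k ^ 2 / 4) *
          ∫ x : ℝ, f x ^ 2 / Real.sqrt (ψ₁ x * ψ₂ x) ^ ((4 : ℝ) + 2 * β)
        ≤ ∫ x : ℝ, (-deriv (deriv f) x + V x * f x) * f x /
            Real.sqrt (ψ₁ x * ψ₂ x) ^ ((2 : ℝ) * β) := by
  intro f hf hfc
  have h11 : (2 : WithTop ℕ∞) = 1 + 1 := by norm_num
  have hψ1d : Differentiable ℝ ψ₁ := h1.differentiable two_ne_zero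
  have hψ2d : Differentiable ℝ ψ₂ := h2.differentiable two_ne_zero
  have hdψ1 : ContDiff ℝ 1 (deriv ψ₁) := (contDiff_succ_iff_deriv.mp (h11 ▸ h1)).2.2
  have hdψ2 : ContDiff ℝ 1 (deriv ψ₂) := (contDiff_succ_iff_deriv.mp (h11 ▸ h2)).2.2
  have hupos : ∀ x, 0 < ψ₁ x * ψ₂ x := fun x => mul_pos (h1pos x) (h2pos x)
  have hucd : ContDiff ℝ 2 (fun x => ψ₁ x * ψ₂ x) := h1.mul h2
  have hu' : deriv (fun y => ψ₁ y * ψ₂ y)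
      = fun x => deriv ψ₁ x * ψ₂ x + ψ₁ x * deriv ψ₂ x :=
    funext fun x => deriv_mul (hψ1d x) (hψ2d x)
  have hu'' : ∀ x, deriv (deriv (fun y => ψ₁ y * ψ₂ y)) x
      = V x * ψ₁ x * ψ₂ x + deriv ψ₁ x * deriv ψ₂ x
        + (deriv ψ₁ x * deriv ψ₂ x + ψ₁ x * (V x * ψ₂ x)) := by
    intro x
    rw [hu', deriv_fun_add (f := fun y => deriv ψ₁ y * ψ₂ y) (g := fun y => ψ₁ y * deriv ψ₂ y) ((hdψ1.differentiable one_ne_zero x).mul (hψ2d x))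
        ((hψ1d x).mul (hdψ2.differentiable one_ne_zero x)),
      deriv_fun_mul (hdψ1.differentiable one_ne_zero x) (hψ2d x),
      deriv_fun_mul (hψ1d x) (hdψ2.differentiable one_ne_zero x), heq1 x, heq2 x]
  have hVu : ∀ x, 4 * V x * (ψ₁ x * ψ₂ x) ^ 2
      = 2 * (ψ₁ x * ψ₂ x) * deriv (deriv (fun y => ψ₁ y * ψ₂ y)) x
        - deriv (fun y => ψ₁ y * ψ₂ y) x ^ 2 + k ^ 2 := by
    intro x
    rw [hu'' x, hu']
    beta_reduce
    rw [← hk x]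
    ring
  have hup : ∀ x, deriv (fun y => ψ₁ y * ψ₂ y) x ^ 2 ≤ k ^ 2 := by
    intro x
    rw [hu']
    beta_reduce
    rw [← hk x]
    have ha : 0 ≤ deriv ψ₁ x := deriv_nonneg_of_monotone h1mono hψ1d x
    have hb : deriv ψ₂ x ≤ 0 := deriv_nonpos_of_antitone h2anti hψ2d x
    nlinarith [mul_nonneg (mul_nonneg (mul_nonneg ha (h2pos x).le) (h1pos x).le)
      (neg_nonneg.2 hb)]
  have hsqrt : ∀ (y c : ℝ), 0 < y → Real.sqrt y ^ (c : ℝ) = y ^ (c / 2) := by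
    intro y c hy
    rw [Real.sqrt_eq_rpow, ← Real.rpow_mul hy.le]
    ring_nf
  have e1 : ∀ x : ℝ, Real.sqrt (ψ₁ x * ψ₂ x) ^ ((4 : ℝ) + 2 * β)
      = (ψ₁ x * ψ₂ x) ^ 2 * (ψ₁ x * ψ₂ x) ^ β := by
    intro x
    rw [hsqrt _ _ (hupos x), show ((4 : ℝ) + 2 * β) / 2 = 2 + β by ring,
      Real.rpow_add (hupos x)]
    congr 1
    rw [show (2 : ℝ) = ((2 : ℕ) : ℝ) by norm_num, Real.rpow_natCast]
  have e2 : ∀ x : ℝ, Real.sqrt (ψ₁ x * ψ₂ x) ^ ((2 : ℝ) * β)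
      = (ψ₁ x * ψ₂ x) ^ β := by
    intro x
    rw [hsqrt _ _ (hupos x), show (2 : ℝ) * β / 2 = β by ring]
  simp only [e1, e2]
  exact main_ineq V (fun x => ψ₁ x * ψ₂ x) k β hV hucd hupos hVu hup f hf hfc
end

section
/- Let V ∈ 𝒱, β ∈ [0,1), and let S = -d²/dx² + V with ψ_* as above. Then for every f ∈ C_0^2(ℝ), ‖ψ_*^{-2-β} f‖_{L^2} ≤ C ‖Sf‖_{L^2}^{(2+β)/4} ‖f‖_{L^2}^{(2-β)/4}, where C = (4/((1-β²)k²))^{(2+β)/4}. -/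
open MeasureTheory Real Filter Set Topology
open scoped ENNReal NNReal

lemma aux_deriv_nonneg {g : ℝ → ℝ} {d x : ℝ} (hm : Monotone g) (hd : HasDerivAt g d x) :
    0 ≤ d := by
  have h := hasDerivAt_iff_tendsto_slope.mp hd
  have h2 : Tendsto (slope g x) (𝓝[>] x) (𝓝 d) :=
    h.mono_left (nhdsWithin_mono x fun y hy => ne_of_gt hy)
  refine ge_of_tendsto h2 ?_
  filter_upwards [self_mem_nhdsWithin] with y hy
  have hxy : x < y := hy
  rw [slope_def_field]
  exact div_nonneg (sub_nonneg.2 (hm hxy.le)) (sub_nonneg.2 hxy.le)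

lemma aux_integral_deriv_zero {g g' : ℝ → ℝ} (hd : ∀ x, HasDerivAt g (g' x) x)
    (hc : Continuous g') (hs : HasCompactSupport g) : ∫ x, g' x = 0 := by
  have hder : deriv g = g' := funext fun x => (hd x).deriv
  have hg1 : ContDiff ℝ 1 g :=
    contDiff_one_iff_deriv.mpr ⟨fun x => (hd x).differentiableAt, hder ▸ hc⟩
  have hsupp : HasCompactSupport g' := hder ▸ hs.deriv
  have hint : Integrable g' := hc.integrable_of_hasCompactSupport hsupp
  have h1 := hs.integral_Ioi_deriv_eq hg1 0
  have h2 := hs.integral_Iic_deriv_eq hg1 0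
  rw [hder] at h1 h2
  rw [← intervalIntegral.integral_Iic_add_Ioi (b := 0) hint.integrableOn hint.integrableOn,
    h1, h2]
  ring

lemma aux_final {A B D c₀ β : ℝ} (hA : 0 ≤ A) (hB : 0 ≤ B) (hD : 0 ≤ D) (hc : 0 < c₀)
    (hβ0 : 0 ≤ β) (hβ1 : β < 1)
    (h : c₀ * A ≤ B ^ (1/2 : ℝ) * (D ^ ((2-β)/(2+β)) * A ^ (2*β/(2+β))) ^ (1/2 : ℝ)) :
    A ^ (1/2 : ℝ) ≤ c₀⁻¹ ^ ((2+β)/4) * B ^ ((2+β)/8) * D ^ ((2-β)/8) := by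
  have h2β : (0:ℝ) < 2 + β := by linarith
  rcases eq_or_lt_of_le hA with hA0 | hA0
  · rw [← hA0, zero_rpow (by norm_num)]
    have : (0:ℝ) ≤ c₀⁻¹ ^ ((2+β)/4) := rpow_nonneg (inv_nonneg.2 hc.le) _
    positivity
  · -- rewrite the RHS of h
    have hsplit : (D ^ ((2-β)/(2+β)) * A ^ (2*β/(2+β))) ^ (1/2 : ℝ)
        = D ^ ((2-β)/(2+β)/2) * A ^ (β/(2+β)) := by
      rw [Real.mul_rpow (rpow_nonneg hD _) (rpow_nonneg hA _),
        ← Real.rpow_mul hD, ← Real.rpow_mul hA]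
      congr 1
      · congr 1; ring
      · congr 1; field_simp
    rw [hsplit] at h
    have hAsplit : A = A ^ (2/(2+β) : ℝ) * A ^ (β/(2+β) : ℝ) := by
      rw [← Real.rpow_add hA0, ← Real.rpow_one A]
      congr 1
      rw [Real.rpow_one]
      field_simp
    nth_rewrite 1 [hAsplit] at h
    have hApos : (0:ℝ) < A ^ (β/(2+β) : ℝ) := rpow_pos_of_pos hA0 _
    have h' : (c₀ * A ^ (2/(2+β) : ℝ)) * A ^ (β/(2+β) : ℝ)
        ≤ (B ^ (1/2:ℝ) * D ^ ((2-β)/(2+β)/2)) * A ^ (β/(2+β) : ℝ) := by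
      calc (c₀ * A ^ (2/(2+β) : ℝ)) * A ^ (β/(2+β) : ℝ)
          = c₀ * (A ^ (2/(2+β) : ℝ) * A ^ (β/(2+β) : ℝ)) := by ring
        _ ≤ B ^ (1/2:ℝ) * (D ^ ((2-β)/(2+β)/2) * A ^ (β/(2+β) : ℝ)) := h
        _ = (B ^ (1/2:ℝ) * D ^ ((2-β)/(2+β)/2)) * A ^ (β/(2+β) : ℝ) := by ring
    have hcancel : c₀ * A ^ (2/(2+β) : ℝ) ≤ B ^ (1/2:ℝ) * D ^ ((2-β)/(2+β)/2) :=
      le_of_mul_le_mul_right h' hApos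
    have hstep : A ^ (2/(2+β) : ℝ) ≤ c₀⁻¹ * (B ^ (1/2:ℝ) * D ^ ((2-β)/(2+β)/2)) := by
      have := (le_div_iff₀' hc).mpr hcancel
      simpa [div_eq_inv_mul] using this
    have hr : (0:ℝ) < (2+β)/4 := by positivity
    have hmono := Real.rpow_le_rpow (rpow_nonneg hA _) hstep hr.le
    rw [← Real.rpow_mul hA] at hmono
    have he1 : (2/(2+β)) * ((2+β)/4) = (1/2 : ℝ) := by field_simp; ring
    rw [he1] at hmono
    refine hmono.trans (le_of_eq ?_)
    rw [Real.mul_rpow (inv_nonneg.2 hc.le) (by positivity),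
      Real.mul_rpow (rpow_nonneg hB _) (rpow_nonneg hD _),
      ← Real.rpow_mul hB, ← Real.rpow_mul hD, ← mul_assoc,
      show (1/2 * ((2+β)/4) : ℝ) = (2+β)/8 by ring,
      show ((2-β)/(2+β)/2 * ((2+β)/4) : ℝ) = (2-β)/8 by field_simp; ring]

set_option maxHeartbeats 2000000 in
/-- Hardy–Rellich inequality: for `V ∈ 𝒱`, `β ∈ [0,1)`, `ψ_* = √(ψ₁ψ₂)` and
`S f = -f'' + V f`, every `f ∈ C₀²(ℝ)` satisfies
`‖ψ_*^{-2-β} f‖_{L²} ≤ C ‖Sf‖_{L²}^{(2+β)/4} ‖f‖_{L²}^{(2-β)/4}` with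
`C = (4/((1-β²)k²))^{(2+β)/4}`. -/
theorem hardy_rellich_interpolation (V ψ₁ ψ₂ : ℝ → ℝ) (k β : ℝ)
    (hV : Continuous V) (hVbdd : ∃ M, ∀ x, V x ≤ M) (hVnn : ∀ x, 0 ≤ V x)
    (hint : Integrable (fun x => |x| * V x))
    (hpos : 0 < ∫ x : ℝ, |x| * V x)
    (h1 : ContDiff ℝ 2 ψ₁) (h2 : ContDiff ℝ 2 ψ₂)
    (h1pos : ∀ x, 0 < ψ₁ x) (h2pos : ∀ x, 0 < ψ₂ x)
    (h1mono : Monotone ψ₁) (h2anti : Antitone ψ₂)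
    (heq1 : ∀ x, deriv (deriv ψ₁) x = V x * ψ₁ x)
    (heq2 : ∀ x, deriv (deriv ψ₂) x = V x * ψ₂ x)
    (hk : ∀ x, deriv ψ₁ x * ψ₂ x - ψ₁ x * deriv ψ₂ x = k) (hkpos : 0 < k)
    (hβ0 : 0 ≤ β) (hβ1 : β < 1) :
    ∀ f : ℝ → ℝ, ContDiff ℝ 2 f → HasCompactSupport f →
      (∫ x : ℝ, (f x / Real.sqrt (ψ₁ x * ψ₂ x) ^ ((2 : ℝ) + β)) ^ 2) ^ ((1 : ℝ) / 2)
        ≤ (4 / ((1 - β ^ 2) * k ^ 2)) ^ ((2 + β) / 4) *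
            (∫ x : ℝ, (-deriv (deriv f) x + V x * f x) ^ 2) ^ ((2 + β) / 8) *
            (∫ x : ℝ, f x ^ 2) ^ ((2 - β) / 8) := by
  intro f hf hcs
  have h2eq : (2 : WithTop ℕ∞) = 1 + 1 := by norm_num
  have h1' : ContDiff ℝ 1 (deriv ψ₁) := ((contDiff_succ_iff_deriv).mp (h2eq ▸ h1)).2.2
  have h2' : ContDiff ℝ 1 (deriv ψ₂) := ((contDiff_succ_iff_deriv).mp (h2eq ▸ h2)).2.2
  have hf' : ContDiff ℝ 1 (deriv f) := ((contDiff_succ_iff_deriv).mp (h2eq ▸ hf)).2.2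
  set d1 := deriv ψ₁ with hd1def
  set d2 := deriv ψ₂ with hd2def
  set f1 := deriv f with hf1def
  set f2 := deriv f1 with hf2def
  have hψ₁d : ∀ x, HasDerivAt ψ₁ (d1 x) x := fun x =>
    ((h1.differentiable (by norm_num)) x).hasDerivAt
  have hψ₂d : ∀ x, HasDerivAt ψ₂ (d2 x) x := fun x =>
    ((h2.differentiable (by norm_num)) x).hasDerivAt
  have hfd : ∀ x, HasDerivAt f (f1 x) x := fun x =>
    ((hf.differentiable (by norm_num)) x).hasDerivAt
  have hf1d : ∀ x, HasDerivAt f1 (f2 x) x := fun x =>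
    ((hf'.differentiable one_ne_zero) x).hasDerivAt
  have hd1d : ∀ x, HasDerivAt d1 (V x * ψ₁ x) x := fun x => by
    have h := ((h1'.differentiable one_ne_zero) x).hasDerivAt
    rwa [show deriv d1 x = V x * ψ₁ x from heq1 x] at h
  have hd2d : ∀ x, HasDerivAt d2 (V x * ψ₂ x) x := fun x => by
    have h := ((h2'.differentiable one_ne_zero) x).hasDerivAt
    rwa [show deriv d2 x = V x * ψ₂ x from heq2 x] at h
  have hd1c : Continuous d1 := h1'.continuous
  have hd2c : Continuous d2 := h2'.continuous
  have hfc : Continuous f := hf.continuous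
  have hf1c : Continuous f1 := hf'.continuous
  have hf2c : Continuous f2 := (contDiff_one_iff_deriv.mp hf').2
  have hd1nn : ∀ x, 0 ≤ d1 x := fun x => aux_deriv_nonneg h1mono (hψ₁d x)
  have hd2np : ∀ x, d2 x ≤ 0 := fun x => by
    have hmono : Monotone fun y => -ψ₂ y := fun u v huv => neg_le_neg (h2anti huv)
    have := aux_deriv_nonneg hmono ((hψ₂d x).neg)
    linarith
  set p : ℝ → ℝ := fun y => ψ₁ y * ψ₂ y with hpdef
  set pd : ℝ → ℝ := fun y => d1 y * ψ₂ y + ψ₁ y * d2 y with hpddef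
  set pd2 : ℝ → ℝ := fun y => V y * ψ₁ y * ψ₂ y + d1 y * d2 y + (d1 y * d2 y + ψ₁ y * (V y * ψ₂ y))
    with hpd2def
  have hppos : ∀ x, 0 < p x := fun x => mul_pos (h1pos x) (h2pos x)
  have hpdh : ∀ x, HasDerivAt p (pd x) x := fun x => (hψ₁d x).mul (hψ₂d x)
  have hpddh : ∀ x, HasDerivAt pd (pd2 x) x := fun x =>
    ((hd1d x).mul (hψ₂d x)).add ((hψ₁d x).mul (hd2d x))
  have hpc : Continuous p := h1.continuous.mul h2.continuous
  have hpdc : Continuous pd := (hd1c.mul h2.continuous).add (h1.continuous.mul hd2c)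
  have hpd2c : Continuous pd2 :=
    (((hV.mul h1.continuous).mul h2.continuous).add (hd1c.mul hd2c)).add
      ((hd1c.mul hd2c).add (h1.continuous.mul (hV.mul h2.continuous)))
  have hrw : ∀ (e : ℝ) (x : ℝ), HasDerivAt (fun y => p y ^ e) (pd x * e * p x ^ (e - 1)) x :=
    fun e x => (hpdh x).rpow_const (Or.inl (hppos x).ne')
  have hrc : ∀ e : ℝ, Continuous fun y => p y ^ e :=
    fun e => hpc.rpow_const fun x => Or.inl (hppos x).ne'
  have hrpos : ∀ (e : ℝ) (x : ℝ), 0 < p x ^ e := fun e x => rpow_pos_of_pos (hppos x) e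
  set w : ℝ → ℝ := fun y => p y ^ (-β) with hwdef
  set w1 : ℝ → ℝ := fun y => pd y * -β * p y ^ (-β - 1) with hw1def
  set G : ℝ → ℝ := fun y => pd y * ((1+β)/2) * p y ^ (-β - 1) with hGdef
  set w2 : ℝ → ℝ := fun y =>
    pd2 y * -β * p y ^ (-β - 1) + pd y * -β * (pd y * (-β - 1) * p y ^ (-β - 1 - 1)) with hw2def
  set G1 : ℝ → ℝ := fun y =>
    pd2 y * ((1+β)/2) * p y ^ (-β - 1)
      + pd y * ((1+β)/2) * (pd y * (-β - 1) * p y ^ (-β - 1 - 1)) with hG1def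
  have hwd : ∀ x, HasDerivAt w (w1 x) x := fun x => hrw (-β) x
  have hw1d : ∀ x, HasDerivAt w1 (w2 x) x := fun x =>
    ((hpddh x).mul_const (-β)).mul (hrw (-β - 1) x)
  have hGd : ∀ x, HasDerivAt G (G1 x) x := fun x =>
    ((hpddh x).mul_const ((1+β)/2)).mul (hrw (-β - 1) x)
  have hwc : Continuous w := hrc (-β)
  have hw1c : Continuous w1 := (hpdc.mul continuous_const).mul (hrc (-β - 1))
  have hGc : Continuous G := (hpdc.mul continuous_const).mul (hrc (-β - 1))
  have hw2c : Continuous w2 :=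
    ((hpd2c.mul continuous_const).mul (hrc (-β - 1))).add
      ((hpdc.mul continuous_const).mul ((hpdc.mul continuous_const).mul (hrc (-β - 1 - 1))))
  have hG1c : Continuous G1 :=
    ((hpd2c.mul continuous_const).mul (hrc (-β - 1))).add
      ((hpdc.mul continuous_const).mul ((hpdc.mul continuous_const).mul (hrc (-β - 1 - 1))))
  set F : ℝ → ℝ := fun y => -(f1 y * f y * w y) + f y * f y * (w1 y / 2) + f y * f y * G y
    with hFdef
  set Φ : ℝ → ℝ := fun y =>
      -((f2 y * f y + f1 y * f1 y) * w y + f1 y * f y * w1 y)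
      + ((f1 y * f y + f y * f1 y) * (w1 y / 2) + f y * f y * (w2 y / 2))
      + ((f1 y * f y + f y * f1 y) * G y + f y * f y * G1 y) with hΦdef
  have hFd : ∀ x, HasDerivAt F (Φ x) x := fun x =>
    ((((hf1d x).mul (hfd x)).mul (hwd x)).neg.add
      (((hfd x).mul (hfd x)).mul ((hw1d x).div_const 2))).add
      (((hfd x).mul (hfd x)).mul (hGd x))
  have hΦc : Continuous Φ :=
    (((((hf2c.mul hfc).add (hf1c.mul hf1c)).mul hwc).add ((hf1c.mul hfc).mul hw1c)).neg.add
      ((((hf1c.mul hfc).add (hfc.mul hf1c)).mul (hw1c.div_const 2)).add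
        ((hfc.mul hfc).mul (hw2c.div_const 2)))).add
      ((((hf1c.mul hfc).add (hfc.mul hf1c)).mul hGc).add ((hfc.mul hfc).mul hG1c))
  have hvf : ∀ x, x ∉ tsupport f → f x = 0 := fun x hx => image_eq_zero_of_notMem_tsupport hx
  have hvf1 : ∀ x, x ∉ tsupport f → f1 x = 0 := fun x hx => by
    by_contra h
    exact hx (support_deriv_subset (Function.mem_support.mpr h))
  have hts1 : tsupport f1 ⊆ tsupport f :=
    closure_minimal support_deriv_subset (isClosed_tsupport f)
  have hvf2 : ∀ x, x ∉ tsupport f → f2 x = 0 := fun x hx => by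
    by_contra h
    exact hx (hts1 (support_deriv_subset (Function.mem_support.mpr h)))
  have hIcs : ∀ g : ℝ → ℝ, (∀ x, x ∉ tsupport f → g x = 0) → HasCompactSupport g :=
    fun g hg => HasCompactSupport.intro hcs hg
  have hInt : ∀ g : ℝ → ℝ, Continuous g → (∀ x, x ∉ tsupport f → g x = 0) → Integrable g :=
    fun g hgc hgv => hgc.integrable_of_hasCompactSupport (hIcs g hgv)
  have hMem : ∀ (g : ℝ → ℝ) (q : ℝ≥0∞), Continuous g → (∀ x, x ∉ tsupport f → g x = 0) →
      MemLp g q := fun g q hgc hgv => hgc.memLp_of_hasCompactSupport (hIcs g hgv)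
  have hFsupp : HasCompactSupport F := hIcs F fun x hx => by
    simp [hFdef, hvf x hx, hvf1 x hx]
  have hzero : ∫ x, Φ x = 0 := aux_integral_deriv_zero hFd hΦc hFsupp
  have hb2 : (0:ℝ) < 1 - β^2 := by nlinarith
  set c₀ : ℝ := (1 - β^2) * k^2 / 4 with hc₀def
  have hc₀ : 0 < c₀ := by
    rw [hc₀def]
    have : (0:ℝ) < k^2 := by positivity
    positivity
  -- pointwise identity and inequality
  have hpoint : (fun x => c₀ * (f x ^ 2 * p x ^ (-β - 1 - 1)))
      ≤ fun x => (-f2 x + V x * f x) * (f x * w x) - Φ x := by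
    intro x
    have hP := hppos x
    have ht : (0:ℝ) < p x ^ (-β) := hrpos _ x
    have e1 : p x ^ (-β - 1) = p x ^ (-β) / p x := by
      rw [Real.rpow_sub hP, Real.rpow_one]
    have e2 : p x ^ (-β - 1 - 1) = p x ^ (-β) / p x / p x := by
      rw [Real.rpow_sub hP, Real.rpow_one, e1]
    have hkx : d1 x * ψ₂ x - ψ₁ x * d2 x = k := hk x
    have hb1b2 : d1 x * d2 x ≤ 0 := mul_nonpos_of_nonneg_of_nonpos (hd1nn x) (hd2np x)
    have hgoal : (-f2 x + V x * f x) * (f x * w x) - Φ x - c₀ * (f x ^ 2 * p x ^ (-β - 1 - 1))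
        = (f1 x * p x ^ (-β) - f x * G x) ^ 2 / p x ^ (-β)
          + f x ^ 2 * (β^2 * (-(d1 x * d2 x)) * (p x ^ (-β) / p x)) := by
      simp only [hΦdef, hwdef, hw1def, hw2def, hGdef, hG1def, hpd2def, hpddef, hc₀def]
      rw [e1, e2]
      rw [show p x = ψ₁ x * ψ₂ x from rfl, ← hkx]
      have hψ1ne := (h1pos x).ne'
      have hψ2ne := (h2pos x).ne'
      field_simp
      ring
    have hsq : 0 ≤ (f1 x * p x ^ (-β) - f x * G x) ^ 2 / p x ^ (-β) :=
      div_nonneg (sq_nonneg _) ht.le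
    have hterm : 0 ≤ f x ^ 2 * (β^2 * (-(d1 x * d2 x)) * (p x ^ (-β) / p x)) :=
      mul_nonneg (sq_nonneg _) (mul_nonneg (mul_nonneg (sq_nonneg β) (by linarith))
        (div_nonneg ht.le hP.le))
    show c₀ * (f x ^ 2 * p x ^ (-β - 1 - 1)) ≤ (-f2 x + V x * f x) * (f x * w x) - Φ x
    have hnn := add_nonneg hsq hterm
    rw [← hgoal] at hnn
    linarith [hnn]
  set A : ℝ := ∫ x, f x ^ 2 * p x ^ (-β - 1 - 1) with hAdef
  set B : ℝ := ∫ x : ℝ, (-f2 x + V x * f x) ^ 2 with hBdef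
  set D : ℝ := ∫ x : ℝ, f x ^ 2 with hDdef
  set M : ℝ := ∫ x, (f x * w x) ^ 2 with hMdef
  have hAnn : 0 ≤ A := integral_nonneg fun x => mul_nonneg (sq_nonneg _) (hrpos _ x).le
  have hBnn : 0 ≤ B := integral_nonneg fun x => sq_nonneg _
  have hDnn : 0 ≤ D := integral_nonneg fun x => sq_nonneg _
  have hMnn : 0 ≤ M := integral_nonneg fun x => sq_nonneg _
  have intA : Integrable (fun x => f x ^ 2 * p x ^ (-β - 1 - 1)) :=
    hInt _ ((hfc.pow 2).mul (hrc _)) fun x hx => by simp [hvf x hx]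
  have intcA : Integrable (fun x => c₀ * (f x ^ 2 * p x ^ (-β - 1 - 1))) := intA.const_mul c₀
  have intSfw : Integrable (fun x => (-f2 x + V x * f x) * (f x * w x)) :=
    hInt _ ((hf2c.neg.add (hV.mul hfc)).mul (hfc.mul hwc)) fun x hx => by
      simp [hvf x hx, hvf2 x hx]
  have intΦ : Integrable Φ := hInt Φ hΦc fun x hx => by
    simp [hΦdef, hvf x hx, hvf1 x hx, hvf2 x hx]
  have step1 : c₀ * A ≤ ∫ x, (-f2 x + V x * f x) * (f x * w x) := by
    have intdiff : Integrable (fun x => (-f2 x + V x * f x) * (f x * w x) - Φ x) :=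
      intSfw.sub intΦ
    have hmono := integral_mono intcA intdiff hpoint
    have heq : ∫ x, ((-f2 x + V x * f x) * (f x * w x) - Φ x)
        = (∫ x, (-f2 x + V x * f x) * (f x * w x)) - ∫ x, Φ x := integral_sub intSfw intΦ
    have heq2 : (∫ x, c₀ * (f x ^ 2 * p x ^ (-β - 1 - 1))) = c₀ * A := integral_const_mul c₀ _
    rw [heq, hzero, sub_zero, heq2] at hmono
    exact hmono
  -- Cauchy-Schwarz
  have conj2 : Real.HolderConjugate 2 2 := Real.holderConjugate_iff.mpr ⟨one_lt_two, by norm_num⟩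
  have step2 : ∫ x, (-f2 x + V x * f x) * (f x * w x) ≤ B ^ (1/2 : ℝ) * M ^ (1/2 : ℝ) := by
    have habs : ∫ x, (-f2 x + V x * f x) * (f x * w x)
        ≤ ∫ x, |(-f2 x + V x * f x)| * |f x * w x| := by
      refine integral_mono intSfw ?_ fun x => ?_
      · exact hInt _ (((hf2c.neg.add (hV.mul hfc)).abs).mul ((hfc.mul hwc).abs))
          fun x hx => by simp [hvf x hx, hvf2 x hx]
      · calc (-f2 x + V x * f x) * (f x * w x) ≤ |(-f2 x + V x * f x) * (f x * w x)| :=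
            le_abs_self _
          _ = |(-f2 x + V x * f x)| * |f x * w x| := abs_mul _ _
    have hH := integral_mul_le_Lp_mul_Lq_of_nonneg conj2
      (Eventually.of_forall fun x => abs_nonneg ((-f2 x + V x * f x)))
      (Eventually.of_forall fun x => abs_nonneg (f x * w x))
      (hMem _ _ ((hf2c.neg.add (hV.mul hfc)).abs) fun x hx => by simp [hvf x hx, hvf2 x hx])
      (hMem _ _ ((hfc.mul hwc).abs) fun x hx => by simp [hvf x hx])
    have hBe : (∫ x, |(-f2 x + V x * f x)| ^ (2:ℝ)) = B := by
      rw [hBdef]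
      congr 1
      funext x
      rw [show (2:ℝ) = ((2:ℕ):ℝ) by norm_num, Real.rpow_natCast, sq_abs]
    have hMe : (∫ x, |f x * w x| ^ (2:ℝ)) = M := by
      rw [hMdef]
      congr 1
      funext x
      rw [show (2:ℝ) = ((2:ℕ):ℝ) by norm_num, Real.rpow_natCast, sq_abs]
    rw [hBe, hMe] at hH
    exact habs.trans hH
  -- interpolation
  have step3 : M ≤ D ^ ((2-β)/(2+β)) * A ^ (2*β/(2+β)) := by
    rcases eq_or_lt_of_le hβ0 with hb0 | hb0
    · have hMD : M = D := by
        rw [hMdef, hDdef]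
        congr 1
        funext x
        rw [hwdef]
        simp [← hb0]
      rw [hMD, ← hb0]
      norm_num
    · have h2mβ : (0:ℝ) < 2 - β := by linarith
      have h2pβ : (0:ℝ) < 2 + β := by linarith
      have hconj : Real.HolderConjugate ((2+β)/(2-β)) ((2+β)/(2*β)) := by
        rw [Real.holderConjugate_iff]; constructor
        · rw [lt_div_iff₀ h2mβ]; linarith
        · rw [inv_div, inv_div]
          field_simp
          ring
      set u : ℝ → ℝ := fun x => (f x ^ 2) ^ ((2-β)/(2+β)) with hudef
      set v : ℝ → ℝ := fun x => (f x ^ 2 * p x ^ (-β - 1 - 1)) ^ (2*β/(2+β)) with hvdef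
      have hunn : 0 ≤ᵐ[volume] u := Eventually.of_forall fun x => rpow_nonneg (sq_nonneg _) _
      have hvnn : 0 ≤ᵐ[volume] v := Eventually.of_forall fun x =>
        rpow_nonneg (mul_nonneg (sq_nonneg _) (hrpos _ x).le) _
      have huc : Continuous u := (hfc.pow 2).rpow_const fun x => Or.inr (by positivity)
      have hvc : Continuous v := ((hfc.pow 2).mul (hrc _)).rpow_const fun x =>
        Or.inr (by positivity)
      have huv0 : ∀ x, x ∉ tsupport f → u x = 0 := fun x hx => by
        rw [hudef]
        simp only [hvf x hx]
        rw [zero_pow (by norm_num), Real.zero_rpow (by positivity)]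
      have hvv0 : ∀ x, x ∉ tsupport f → v x = 0 := fun x hx => by
        rw [hvdef]
        simp only [hvf x hx]
        rw [zero_pow (by norm_num), zero_mul, Real.zero_rpow (by positivity)]
      have hH := integral_mul_le_Lp_mul_Lq_of_nonneg hconj hunn hvnn
        (hMem u _ huc huv0) (hMem v _ hvc hvv0)
      have huvM : (∫ x, u x * v x) = M := by
        rw [hMdef]
        congr 1
        funext x
        simp only [hudef, hvdef, hwdef]
        have hP := hppos x
        rw [Real.mul_rpow (sq_nonneg _) (hrpos _ x).le, ← mul_assoc,
          ← Real.rpow_add' (sq_nonneg (f x)) (by positivity),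
          show (2-β)/(2+β) + 2*β/(2+β) = (1:ℝ) by
            rw [← add_div, div_eq_one_iff_eq (ne_of_gt h2pβ)]; ring,
          Real.rpow_one, ← Real.rpow_mul hP.le,
          show ((-β - 1 - 1)*(2*β/(2+β)) : ℝ) = -β + -β by field_simp; ring,
          Real.rpow_add hP, mul_pow]
        ring
      have huP : (fun x => u x ^ ((2+β)/(2-β))) = fun x => f x ^ 2 := by
        funext x
        simp only [hudef]
        rw [← Real.rpow_mul (sq_nonneg _),
          show ((2-β)/(2+β)*((2+β)/(2-β)) : ℝ) = 1 by field_simp,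
          Real.rpow_one]
      have hvQ : (fun x => v x ^ ((2+β)/(2*β))) = fun x => f x ^ 2 * p x ^ (-β - 1 - 1) := by
        funext x
        simp only [hvdef]
        rw [← Real.rpow_mul (mul_nonneg (sq_nonneg _) (hrpos _ x).le),
          show (2*β/(2+β)*((2+β)/(2*β)) : ℝ) = 1 by field_simp,
          Real.rpow_one]
      rw [huvM, huP, hvQ, one_div_div, one_div_div, ← hDdef, ← hAdef] at hH
      exact hH
  -- assemble
  have hchain : c₀ * A ≤ B ^ (1/2:ℝ) * (D ^ ((2-β)/(2+β)) * A ^ (2*β/(2+β))) ^ (1/2:ℝ) := by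
    refine (step1.trans step2).trans ?_
    exact mul_le_mul_of_nonneg_left (Real.rpow_le_rpow hMnn step3 (by norm_num))
      (rpow_nonneg hBnn _)
  have hfinal := aux_final hAnn hBnn hDnn hc₀ hβ0 hβ1 hchain
  have hLHS : (∫ x : ℝ, (f x / Real.sqrt (ψ₁ x * ψ₂ x) ^ ((2:ℝ) + β)) ^ 2) = A := by
    rw [hAdef]
    congr 1
    funext x
    show (f x / Real.sqrt (ψ₁ x * ψ₂ x) ^ ((2:ℝ) + β)) ^ 2
        = f x ^ 2 * (ψ₁ x * ψ₂ x) ^ (-β - 1 - 1)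
    have hP : (0:ℝ) < ψ₁ x * ψ₂ x := mul_pos (h1pos x) (h2pos x)
    rw [div_pow, ← Real.rpow_natCast (Real.sqrt (ψ₁ x * ψ₂ x) ^ ((2:ℝ) + β)) 2,
      ← Real.rpow_mul (Real.sqrt_nonneg _), Real.sqrt_eq_rpow, ← Real.rpow_mul hP.le,
      show (1/2 * (((2:ℝ) + β) * ((2:ℕ):ℝ)) : ℝ) = β + 1 + 1 by push_cast; ring,
      show (-β - 1 - 1 : ℝ) = -(β + 1 + 1) by ring,
      Real.rpow_neg hP.le, div_eq_mul_inv]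
  have hC : (4 / ((1 - β ^ 2) * k ^ 2)) = c₀⁻¹ := by
    rw [hc₀def, inv_div]
  rw [hLHS, hC]
  exact hfinal
end
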